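/- arXiv:0811.2689 — 9 statements merged into one kernel-verified Lean document; each statement's English description precedes it below -/
import Mathlib

section
/- Let L be a finite-dimensional Lie algebra over a field F, let B be a c-ideal of L, and let K be a subalgebra of L with B ≤ K ≤ L. Then B is a c-ideal of K. -/
/-! Common definitions: c-ideals and related notions for Lie algebras
(following D. Towers, "C-ideals of Lie algebras"). -/

section Defs

variable (F : Type*) {L : Type*} [Field F] [LieRing L] [LieAlgebra F L]

/-- `B` is a *c-ideal* of `L`: there is an ideal `C` of `L` with `L = B + C` and
`B ∩ C ≤ B_L`, where `B_L` is the largest ideal of `L` contained in `B`; equivalently,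
`B ∩ C` is contained in some ideal `D` of `L` with `D ≤ B`. -/
def IsCIdeal (B : LieSubalgebra F L) : Prop :=
  ∃ C : LieIdeal F L,
    B.toSubmodule ⊔ (C : Submodule F L) = ⊤ ∧
    ∃ D : LieIdeal F L, (∀ x ∈ D, x ∈ B) ∧ ∀ x ∈ B, x ∈ C → x ∈ D

/-- A maximal subalgebra of `L`: proper, and maximal among proper subalgebras. -/
def IsMaximalSubalgebra (M : LieSubalgebra F L) : Prop :=
  M ≠ ⊤ ∧ ∀ K : LieSubalgebra F L, M < K → K = ⊤

/-- `B` is a maximal subalgebra of the subalgebra `C`: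
`B` is a proper subalgebra of `C`, maximal among proper subalgebras contained in `C`. -/
def IsMaximalSubalgebraOf (B C : LieSubalgebra F L) : Prop :=
  B < C ∧ ∀ K : LieSubalgebra F L, B < K → K ≤ C → K = C

/-- A maximal nilpotent subalgebra of `L`:
nilpotent and maximal among nilpotent subalgebras. -/
def IsMaximalNilpotentSubalgebra (C : LieSubalgebra F L) : Prop :=
  LieRing.IsNilpotent C ∧
    ∀ D : LieSubalgebra F L, LieRing.IsNilpotent D → C ≤ D → C = D

/-- The natural quotient map `L → L ⧸ I` as a morphism of Lie algebras. -/
def quotMk (I : LieIdeal F L) : L →ₗ⁅F⁆ L ⧸ I :=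
  { (LieSubmodule.Quotient.mk' I).toLinearMap with
    map_lie' := fun {_ _} => rfl }

/-- A supersolvable Lie algebra: there is a chain of ideals `0 = L_0 ⊆ ⋯ ⊆ L_n = L`
with `dim L_i = i` for each `0 ≤ i ≤ n`. -/
def IsSupersolvable (L : Type*) [LieRing L] [LieAlgebra F L] : Prop :=
  ∃ (n : ℕ) (c : ℕ → LieIdeal F L), Monotone c ∧ c 0 = ⊥ ∧ c n = ⊤ ∧
    ∀ i ≤ n, Module.finrank F (c i) = i

/-- A minimal abelian ideal of `L`: a nonzero abelian ideal `A` such that the only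
ideals of `L` contained in `A` are `0` and `A`. -/
def IsMinimalAbelianIdeal (A : LieIdeal F L) : Prop :=
  A ≠ ⊥ ∧ IsLieAbelian A ∧ ∀ I : LieIdeal F L, I ≤ A → I = ⊥ ∨ I = A

/-- The one-dimensional subspace spanned by `x`, as a Lie subalgebra
(it is closed under the bracket since `⁅x,x⁆ = 0`). -/
def lineSpan (x : L) : LieSubalgebra F L :=
  { Submodule.span F {x} with
    lie_mem' := by
      intro a b ha hb
      replace ha : a ∈ Submodule.span F {x} := ha
      replace hb : b ∈ Submodule.span F {x} := hb
      rw [Submodule.mem_span_singleton] at ha hb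
      obtain ⟨c, rfl⟩ := ha
      obtain ⟨d, rfl⟩ := hb
      show ⁅c • x, d • x⁆ ∈ Submodule.span F {x}
      simp }

/-- The Frattini subalgebra of a Lie algebra: the intersection of all maximal subalgebras. -/
def frattiniSubalgebra (L : Type*) [LieRing L] [LieAlgebra F L] : LieSubalgebra F L :=
  sInf {M : LieSubalgebra F L | IsMaximalSubalgebra F M}

/-- An almost abelian Lie algebra `K`: `K = K² ⊕ Fx` for some `x ∈ K`, where the derived
subalgebra `K²` is abelian and `⁅x, y⁆ = y` for all `y ∈ K²`. -/
def IsAlmostAbelian (K : Type*) [LieRing K] [LieAlgebra F K] : Prop :=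
  ∃ x : K, IsLieAbelian (LieAlgebra.derivedSeries F K 1) ∧
    (∀ y ∈ LieAlgebra.derivedSeries F K 1, ⁅x, y⁆ = y) ∧
    (LieAlgebra.derivedSeries F K 1 : Submodule F K) ⊔ Submodule.span F {x} = ⊤ ∧
    (LieAlgebra.derivedSeries F K 1 : Submodule F K) ⊓ Submodule.span F {x} = ⊥

end Defs

/-- If `B` is a c-ideal of `L` and `B ≤ K ≤ L` then `B` is a c-ideal of `K`. -/
theorem isCIdeal_of_le {F L : Type*} [Field F] [LieRing L] [LieAlgebra F L]
    [FiniteDimensional F L] (B K : LieSubalgebra F L) (hBK : B ≤ K)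
    (hB : IsCIdeal F B) : IsCIdeal F (B.comap K.incl) := by
  obtain ⟨C, hsup, D, hD1, hD2⟩ := hB
  refine ⟨LieIdeal.comap K.incl C, ?_, LieIdeal.comap K.incl D, ?_, ?_⟩
  · rw [Submodule.eq_top_iff']
    intro k
    have hk : (k : L) ∈ B.toSubmodule ⊔ (C : Submodule F L) := by rw [hsup]; trivial
    obtain ⟨b, hb, c, hc, hbc⟩ := Submodule.mem_sup.mp hk
    have hbK : b ∈ K := hBK hb
    have hcK : c ∈ K := by
      have h : c = (k : L) - b := by rw [← hbc]; abel
      rw [h]; exact K.sub_mem k.2 hbK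
    refine Submodule.mem_sup.mpr ⟨⟨b, hbK⟩, ?_, ⟨c, hcK⟩, ?_, ?_⟩
    · exact hb
    · show K.incl ⟨c, hcK⟩ ∈ C
      exact hc
    · ext; exact hbc
  · intro x hx
    exact hD1 _ hx
  · intro x hx hxC
    exact hD2 _ hx hxC
end

section
/- Let L be a finite-dimensional Lie algebra over a field F and let B, C be subalgebras of L with B ≤ F(C), where F(C) is the Frattini subalgebra of C (the intersection of all maximal subalgebras of C). If B is a c-ideal of L then B is an ideal of L and B is contained in the Frattini ideal φ(L) of L. -/
section Aux

variable {F L : Type*} [Field F] [LieRing L] [LieAlgebra F L]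

/-- Every proper subalgebra of a finite-dimensional Lie algebra is contained in a
maximal subalgebra. -/
lemma exists_maximal_subalgebra_aux [FiniteDimensional F L] (n : ℕ)
    (X : LieSubalgebra F L) (hX : X ≠ ⊤)
    (hn : Module.finrank F L - Module.finrank F X.toSubmodule ≤ n) :
    ∃ M : LieSubalgebra F L, IsMaximalSubalgebra F M ∧ X ≤ M := by
  induction n generalizing X with
  | zero =>
    exfalso
    have h1 : X.toSubmodule < ⊤ := by
      rcases lt_or_eq_of_le (le_top : X.toSubmodule ≤ ⊤) with h | h
      · exact h
      · exact absurd (by ext x; simpa using (Submodule.eq_top_iff'.mp h x)) hX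
    have := Submodule.finrank_lt (K := F) (V := L) h1.ne
    omega
  | succ n ih =>
    by_cases hmax : ∀ K : LieSubalgebra F L, X < K → K = ⊤
    · exact ⟨X, ⟨hX, hmax⟩, le_rfl⟩
    · push_neg at hmax
      obtain ⟨K, hXK, hKne⟩ := hmax
      have hsub : X.toSubmodule < K.toSubmodule := by
        refine lt_of_le_of_ne (fun x hx => hXK.le hx) (fun h => ?_)
        refine hXK.ne (le_antisymm hXK.le (fun x hx => ?_))
        have : x ∈ K.toSubmodule := hx
        rw [← h] at this; exact this
      have h2 : Module.finrank F X.toSubmodule < Module.finrank F K.toSubmodule :=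
        Submodule.finrank_lt_finrank_of_lt hsub
      have h3 : Module.finrank F K.toSubmodule ≤ Module.finrank F L :=
        Submodule.finrank_le _
      obtain ⟨M, hM, hKM⟩ := ih K hKne (by omega)
      exact ⟨M, hM, hXK.le.trans hKM⟩

lemma exists_maximal_subalgebra [FiniteDimensional F L]
    (X : LieSubalgebra F L) (hX : X ≠ ⊤) :
    ∃ M : LieSubalgebra F L, IsMaximalSubalgebra F M ∧ X ≤ M :=
  exists_maximal_subalgebra_aux _ X hX le_rfl

/-- Nongenerator property of the Frattini subalgebra. -/
lemma eq_top_of_frattini_sup [FiniteDimensional F L] (X : LieSubalgebra F L)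
    (h : ∀ x : L, ∃ u ∈ frattiniSubalgebra F L, ∃ v ∈ X, x = u + v) :
    ∀ x : L, x ∈ X := by
  by_cases hX : X = ⊤
  · intro x; rw [hX]; trivial
  · exfalso
    obtain ⟨M, hM, hXM⟩ := exists_maximal_subalgebra X hX
    have hFM : frattiniSubalgebra F L ≤ M := sInf_le hM
    apply hM.1
    ext x
    simp only [LieSubalgebra.mem_top, iff_true]
    obtain ⟨u, hu, v, hv, rfl⟩ := h x
    exact M.add_mem (hFM hu) (hXM hv)

end Aux

/-- If `B ≤ F(C)` (the Frattini subalgebra of the subalgebra `C`)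
and `B` is a c-ideal of `L`, then `B` is an ideal of `L` and `B ≤ φ(L)`, i.e. `B` is
contained in an ideal of `L` which lies in the Frattini subalgebra of `L`. -/
theorem isIdeal_of_isCIdeal_le_frattini {F L : Type*} [Field F] [LieRing L] [LieAlgebra F L]
    [FiniteDimensional F L] (B C : LieSubalgebra F L)
    (hBF : B ≤ (frattiniSubalgebra F C).map C.incl)
    (hB : IsCIdeal F B) :
    (∀ x : L, ∀ b ∈ B, ⁅x, b⁆ ∈ B) ∧
      ∃ J : LieIdeal F L, (∀ x ∈ B, x ∈ J) ∧ ∀ x ∈ J, x ∈ frattiniSubalgebra F L := by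
  haveI : FiniteDimensional F C := FiniteDimensional.finiteDimensional_submodule C.toSubmodule
  obtain ⟨C', hsup, D, hDB, hBD⟩ := hB
  -- `B ≤ C`
  have hBC : ∀ b ∈ B, b ∈ C := by
    intro b hb
    obtain ⟨y, _, rfl⟩ := (LieSubalgebra.mem_map _ _ _).mp (hBF hb)
    exact y.2
  -- `B`, viewed inside `C`, lies in the Frattini subalgebra of `C`
  have hBFr : ∀ x : C, (x : L) ∈ B → x ∈ frattiniSubalgebra F C := by
    intro x hx
    obtain ⟨y, hy, hyx⟩ := (LieSubalgebra.mem_map _ _ _).mp (hBF hx)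
    have : y = x := Subtype.coe_injective hyx
    rwa [this] at hy
  -- Key step 1: `C ≤ C'`
  have hCC' : ∀ c ∈ C, c ∈ C' := by
    intro c hc
    set X₁ : LieSubalgebra F C := (C' : LieSubalgebra F L).comap C.incl with hX₁
    have hmem : ∀ x : C, x ∈ X₁ ↔ (x : L) ∈ C' := fun x => Iff.rfl
    have key : ∀ x : C, x ∈ X₁ := by
      apply eq_top_of_frattini_sup
      intro x
      have hx : (x : L) ∈ B.toSubmodule ⊔ (C' : Submodule F L) := by rw [hsup]; trivial
      obtain ⟨b, hb, z, hz, hbz⟩ := Submodule.mem_sup.mp hx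
      have hbC : b ∈ C := hBC b hb
      have hzC : z ∈ C := by
        have : z = (x : L) - b := by rw [← hbz]; abel
        rw [this]; exact C.sub_mem x.2 hbC
      refine ⟨⟨b, hbC⟩, hBFr ⟨b, hbC⟩ hb, ⟨z, hzC⟩, hz, ?_⟩
      exact Subtype.ext hbz.symm
    exact (hmem ⟨c, hc⟩).mp (key ⟨c, hc⟩)
  -- Hence `B = D` as sets, so `B` is an ideal
  have hBeqD : ∀ b ∈ B, b ∈ D := fun b hb => hBD b hb (hCC' b (hBC b hb))
  constructor
  · intro x b hb
    exact hDB _ (D.lie_mem (hBeqD b hb))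
  · refine ⟨D, hBeqD, ?_⟩
    -- Key step 2: `D ≤ M` for every maximal subalgebra `M` of `L`
    have hDmax : ∀ M : LieSubalgebra F L, IsMaximalSubalgebra F M → ∀ x ∈ D, x ∈ M := by
      intro M hM
      by_cases hDM : ∀ x ∈ D, x ∈ M
      · exact hDM
      · exfalso
        push_neg at hDM
        obtain ⟨d, hdD, hdM⟩ := hDM
        -- `K := M + D` is a subalgebra since `D` is an ideal
        set K : LieSubalgebra F L :=
          { toSubmodule := M.toSubmodule ⊔ (D : Submodule F L)
            lie_mem' := by
              intro x y hx hy
              obtain ⟨m, hm, u, hu, rfl⟩ := Submodule.mem_sup.mp hx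
              obtain ⟨m', hm', u', hu', rfl⟩ := Submodule.mem_sup.mp hy
              have expand : ⁅m + u, m' + u'⁆ = ⁅m, m'⁆ + (⁅m, u'⁆ + ⁅u, m' + u'⁆) := by
                rw [add_lie, lie_add]; abel
              rw [expand]
              apply Submodule.add_mem
              · exact Submodule.mem_sup_left (M.lie_mem hm hm')
              · apply Submodule.mem_sup_right
                exact (D : Submodule F L).add_mem (D.lie_mem hu') (lie_mem_left F L D _ _ hu) } with hK
        have hMK : M < K := by
          refine lt_of_le_of_ne (fun x hx => Submodule.mem_sup_left hx) (fun h => ?_)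
          apply hdM
          rw [h]
          exact Submodule.mem_sup_right hdD
        have hKtop : K = ⊤ := hM.2 K hMK
        -- `C ≤ M`
        have hCM : ∀ c ∈ C, c ∈ M := by
          intro c hc
          set X₂ : LieSubalgebra F C := M.comap C.incl with hX₂
          have key : ∀ x : C, x ∈ X₂ := by
            apply eq_top_of_frattini_sup
            intro x
            have hx : (x : L) ∈ M.toSubmodule ⊔ (D : Submodule F L) := by
              have : (x : L) ∈ K := by rw [hKtop]; trivial
              exact this
            obtain ⟨m, hm, u, hu, hmu⟩ := Submodule.mem_sup.mp hx
            have huB : u ∈ B := hDB u hu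
            have huC : u ∈ C := hBC u huB
            have hmC : m ∈ C := by
              have : m = (x : L) - u := by rw [← hmu]; abel
              rw [this]; exact C.sub_mem x.2 huC
            refine ⟨⟨u, huC⟩, hBFr ⟨u, huC⟩ huB, ⟨m, hmC⟩, hm, ?_⟩
            apply Subtype.ext
            show (x : L) = u + m
            rw [← hmu]; abel
          exact key ⟨c, hc⟩
        exact hdM (hCM d (hBC d (hDB d hdD)))
    intro x hx
    have : x ∈ (↑(sInf {M : LieSubalgebra F L | IsMaximalSubalgebra F M}) : Set L) := by
      rw [LieSubalgebra.coe_sInf]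
      simp only [Set.mem_iInter]
      intro M hM
      exact hDmax M hM x hx
    exact this
end

section
/- Let L be a finite-dimensional Lie algebra over any field F. Then every maximal subalgebra of L is a c-ideal of L if and only if L is solvable. -/
open Module LieAlgebra

section Aux
variable {F L : Type*} [Field F] [LieRing L] [LieAlgebra F L]

/-- The sup of a subalgebra and an ideal is a subalgebra. -/
def supIdeal (M : LieSubalgebra F L) (C : LieIdeal F L) : LieSubalgebra F L :=
  { M.toSubmodule ⊔ (C : Submodule F L) with
    lie_mem' := by
      intro x y hx hy
      replace hx : x ∈ M.toSubmodule ⊔ (C : Submodule F L) := hx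
      replace hy : y ∈ M.toSubmodule ⊔ (C : Submodule F L) := hy
      obtain ⟨m, hm, c, hc, rfl⟩ := Submodule.mem_sup.mp hx
      obtain ⟨m', hm', c', hc', rfl⟩ := Submodule.mem_sup.mp hy
      show ⁅m + c, m' + c'⁆ ∈ M.toSubmodule ⊔ (C : Submodule F L)
      have : ⁅m + c, m' + c'⁆ = ⁅m, m'⁆ + (⁅m, c'⁆ + (⁅c, m'⁆ + ⁅c, c'⁆)) := by
        rw [lie_add, add_lie, add_lie]; abel
      rw [this]
      refine Submodule.add_mem _ (Submodule.mem_sup_left (M.lie_mem hm hm')) ?_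
      have h1 : ⁅m, c'⁆ ∈ C := C.lie_mem hc'
      have h2 : ⁅c, m'⁆ ∈ C := by
        rw [← lie_skew]; exact neg_mem (C.lie_mem hc)
      have h3 : ⁅c, c'⁆ ∈ C := C.lie_mem hc'
      exact Submodule.add_mem _ (Submodule.mem_sup_right h1)
        (Submodule.add_mem _ (Submodule.mem_sup_right h2) (Submodule.mem_sup_right h3)) }

lemma mem_supIdeal_left {M : LieSubalgebra F L} {C : LieIdeal F L} {x : L} (h : x ∈ M) :
    x ∈ supIdeal M C := Submodule.mem_sup_left h

lemma mem_supIdeal_right {M : LieSubalgebra F L} {C : LieIdeal F L} {x : L} (h : x ∈ C) :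
    x ∈ supIdeal M C := Submodule.mem_sup_right h

lemma exists_le_maximal [FiniteDimensional F L] (B : LieSubalgebra F L) (hB : B ≠ ⊤) :
    ∃ M : LieSubalgebra F L, IsMaximalSubalgebra F M ∧ B ≤ M := by
  suffices H : ∀ (k : ℕ) (B : LieSubalgebra F L), finrank F L - finrank F B ≤ k → B ≠ ⊤ →
      ∃ M : LieSubalgebra F L, IsMaximalSubalgebra F M ∧ B ≤ M from
    H (finrank F L - finrank F B) B le_rfl hB
  intro k
  induction k with
  | zero =>
    intro B hle hne
    exfalso
    apply hne
    have e : finrank F B = finrank F B.toSubmodule := rfl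
    have h1 : finrank F B.toSubmodule ≤ finrank F L := (B.toSubmodule).finrank_le
    have h2 : finrank F (B.toSubmodule) = finrank F L := by omega
    have := Submodule.eq_top_of_finrank_eq h2
    rw [← LieSubalgebra.toSubmodule_inj]
    simpa using this
  | succ k ih =>
    intro B hle hne
    by_cases hmax : ∀ K : LieSubalgebra F L, B < K → K = ⊤
    · exact ⟨B, ⟨hne, hmax⟩, le_rfl⟩
    · push_neg at hmax
      obtain ⟨K, hBK, hKtop⟩ := hmax
      have eB : finrank F B = finrank F B.toSubmodule := rfl
      have eK : finrank F K = finrank F K.toSubmodule := rfl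
      have hlt : finrank F B.toSubmodule < finrank F K.toSubmodule := by
        apply Submodule.finrank_lt_finrank_of_lt
        rw [lt_iff_le_and_ne]
        constructor
        · exact (LieSubalgebra.toSubmodule_le_toSubmodule _ _).mpr hBK.le
        · intro h
          exact hBK.ne ((LieSubalgebra.toSubmodule_inj _ _).mp h)
      have hK : finrank F L - finrank F K ≤ k := by
        have := (K.toSubmodule).finrank_le
        omega
      obtain ⟨M, hM, hKM⟩ := ih K hK hKtop
      exact ⟨M, hM, hBK.le.trans hKM⟩

end Aux
section Bwd
variable {F L : Type*} [Field F] [LieRing L] [LieAlgebra F L]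

open Classical in
theorem isCIdeal_of_isSolvable [LieAlgebra.IsSolvable L]
    (M : LieSubalgebra F L) (hM : IsMaximalSubalgebra F M) : IsCIdeal F M := by
  obtain ⟨K, hK⟩ := (LieAlgebra.isSolvable_iff (R := F) (L := L)).mp inferInstance
  set P : ℕ → Prop := fun k => ¬ (∀ x ∈ LieAlgebra.derivedSeries F L k, x ∈ M) with hP
  have hP0 : P 0 := by
    intro hall
    apply hM.1
    ext x
    simp only [LieSubalgebra.mem_top, iff_true]
    exact hall x (LieSubmodule.mem_top x)
  have hPK : ¬ P K := by
    intro h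
    apply h
    intro x hx
    rw [hK] at hx
    simp only [LieSubmodule.mem_bot] at hx
    simp [hx]
  set k := Nat.findGreatest P K with hk
  have hPk : P k := Nat.findGreatest_spec (Nat.zero_le K) hP0
  have hksucc : ∀ x ∈ LieAlgebra.derivedSeries F L (k + 1), x ∈ M := by
    by_cases hle : k + 1 ≤ K
    · have := Nat.findGreatest_is_greatest (k.lt_succ_self) hle
      rw [not_not] at this
      exact this
    · intro x hx
      have : LieAlgebra.derivedSeries F L (k+1) ≤ LieAlgebra.derivedSeries F L K :=
        LieAlgebra.derivedSeriesOfIdeal_antitone (I := (⊤ : LieIdeal F L)) (by omega : K ≤ k + 1)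
      have := this hx
      rw [hK] at this
      simp only [LieSubmodule.mem_bot] at this
      simp [this]
  set C := LieAlgebra.derivedSeries F L k with hC
  -- M ⊔ C = ⊤
  have hsup : M.toSubmodule ⊔ (C : Submodule F L) = ⊤ := by
    have hlt : M < supIdeal M C := by
      rw [lt_iff_le_and_ne]
      refine ⟨fun x hx => mem_supIdeal_left hx, ?_⟩
      intro h
      apply hPk
      intro x hx
      rw [h]
      exact mem_supIdeal_right hx
    have := hM.2 _ hlt
    have : (supIdeal M C).toSubmodule = (⊤ : LieSubalgebra F L).toSubmodule := by rw [this]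
    exact this
  refine ⟨C, hsup, ?_⟩
  -- D := M ⊓ C is an ideal
  refine ⟨{ toSubmodule := M.toSubmodule ⊓ (C : Submodule F L), lie_mem := ?_ }, ?_, ?_⟩
  · intro x y hy
    change y ∈ M.toSubmodule ⊓ (C : Submodule F L) at hy
    change ⁅x, y⁆ ∈ M.toSubmodule ⊓ (C : Submodule F L)
    simp only [Submodule.mem_inf] at hy ⊢
    obtain ⟨hyM, hyC⟩ := hy
    have hx : x ∈ M.toSubmodule ⊔ (C : Submodule F L) := by rw [hsup]; trivial
    obtain ⟨m, hm, c, hc, rfl⟩ := Submodule.mem_sup.mp hx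
    rw [add_lie]
    constructor
    · apply Submodule.add_mem
      · exact M.lie_mem hm hyM
      · have : ⁅c, y⁆ ∈ LieAlgebra.derivedSeries F L (k+1) := by
          have hsucc := LieAlgebra.derivedSeriesOfIdeal_succ F L (⊤ : LieIdeal F L) k
          rw [LieAlgebra.derivedSeries_def, hsucc]
          exact LieSubmodule.lie_mem_lie hc hyC
        exact hksucc _ this
    · exact Submodule.add_mem _ (C.lie_mem hyC) (C.lie_mem hyC)
  · intro x hx
    simp only [LieSubmodule.mem_mk_iff', Submodule.mem_inf] at hx
    exact hx.1
  · intro x hxM hxC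
    simp only [LieSubmodule.mem_mk_iff', Submodule.mem_inf]
    exact ⟨hxM, hxC⟩

end Bwd
section Fwd
variable {F : Type*} [Field F]

theorem quot_maximal_isCIdeal {L : Type*} [LieRing L] [LieAlgebra F L] (I : LieIdeal F L)
    (h : ∀ M : LieSubalgebra F L, IsMaximalSubalgebra F M → IsCIdeal F M)
    (M' : LieSubalgebra F (L ⧸ I)) (hM' : IsMaximalSubalgebra F M') : IsCIdeal F M' := by
  set π : L →ₗ⁅F⁆ L ⧸ I := quotMk F I with hπ
  have hsurj : Function.Surjective π := Quot.mk_surjective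
  have hker : ∀ x : L, π x = 0 → x ∈ I := by
    intro x hx
    exact (LieSubmodule.Quotient.mk_eq_zero I).mp hx
  have hker' : ∀ x : L, x ∈ I → π x = 0 := by
    intro x hx
    exact (LieSubmodule.Quotient.mk_eq_zero I).mpr hx
  set M : LieSubalgebra F L := LieSubalgebra.comap π M' with hMdef
  have hmemM : ∀ x : L, x ∈ M ↔ π x ∈ M' := fun x => Iff.rfl
  have hIM : ∀ x ∈ I, x ∈ M := by
    intro x hx
    rw [hmemM, hker' x hx]
    exact M'.zero_mem
  have hMmax : IsMaximalSubalgebra F M := by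
    constructor
    · intro htop
      apply hM'.1
      ext y
      simp only [LieSubalgebra.mem_top, iff_true]
      obtain ⟨x, rfl⟩ := hsurj y
      have : x ∈ M := by rw [htop]; trivial
      exact (hmemM x).mp this
    · intro K hMK
      have hle : M' ≤ LieSubalgebra.map π K := by
        intro y hy
        obtain ⟨x, rfl⟩ := hsurj y
        exact (LieSubalgebra.mem_map _ _ _).mpr ⟨x, hMK.le ((hmemM x).mpr hy), rfl⟩
      have hne : M' ≠ LieSubalgebra.map π K := by
        intro he
        obtain ⟨x, hxK, hxM⟩ := SetLike.exists_of_lt hMK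
        apply hxM
        rw [hmemM, he]
        exact (LieSubalgebra.mem_map _ _ _).mpr ⟨x, hxK, rfl⟩
      have htop := hM'.2 _ (lt_of_le_of_ne hle hne)
      ext z
      simp only [LieSubalgebra.mem_top, iff_true]
      have : π z ∈ LieSubalgebra.map π K := by rw [htop]; trivial
      obtain ⟨w, hwK, hw⟩ := (LieSubalgebra.mem_map _ _ _).mp this
      have hzw : z - w ∈ I := by
        apply hker
        have h1 : π (z - w) = π z - π w := π.toLinearMap.map_sub z w
        rw [h1, hw, sub_self]
      have : z = w + (z - w) := by abel
      rw [this]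
      exact K.add_mem hwK (hMK.le (hIM _ hzw))
  obtain ⟨C, hsup, D, hD1, hD2⟩ := h M hMmax
  have hmapmem : ∀ (J : LieIdeal F L) (x : L ⧸ I), x ∈ LieIdeal.map π J → ∃ j ∈ J, π j = x := by
    intro J x hx
    have e := LieIdeal.coe_map_of_surjective (f := π) (I := J) hsurj
    have hx' : x ∈ LieSubmodule.toSubmodule (LieIdeal.map π J) := hx
    rw [e] at hx'
    obtain ⟨j, hj, rfl⟩ := hx'
    exact ⟨j, hj, rfl⟩
  refine ⟨LieIdeal.map π C, ?_, LieIdeal.map π D, ?_, ?_⟩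
  · rw [eq_top_iff]
    intro y _
    obtain ⟨x, rfl⟩ := hsurj y
    have hx : x ∈ (⊤ : Submodule F L) := trivial
    rw [← hsup] at hx
    obtain ⟨m, hm, c, hc, rfl⟩ := Submodule.mem_sup.mp hx
    have h1 : π (m + c) = π m + π c := π.toLinearMap.map_add m c
    rw [h1]
    apply Submodule.add_mem
    · apply Submodule.mem_sup_left
      exact (hmemM m).mp hm
    · apply Submodule.mem_sup_right
      show π c ∈ LieIdeal.map π C
      exact LieIdeal.mem_map hc
  · intro x hx
    obtain ⟨d, hd, rfl⟩ := hmapmem D x hx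
    exact (hmemM d).mp (hD1 d hd)
  · intro x hxM hxC
    obtain ⟨c, hc, rfl⟩ := hmapmem C x hxC
    exact LieIdeal.mem_map (hD2 c ((hmemM c).mpr hxM) hc)

end Fwd
section Main
variable {F : Type*} [Field F]

theorem isSolvable_of_forall_maximal_isCIdeal {L : Type*} [LieRing L] [LieAlgebra F L]
    [FiniteDimensional F L]
    (h : ∀ M : LieSubalgebra F L, IsMaximalSubalgebra F M → IsCIdeal F M) :
    LieAlgebra.IsSolvable L := by
  suffices H : ∀ (n : ℕ) (L : Type _) (_ : LieRing L) (_ : LieAlgebra F L)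
      (_ : FiniteDimensional F L), Module.finrank F L ≤ n →
      (∀ M : LieSubalgebra F L, IsMaximalSubalgebra F M → IsCIdeal F M) →
      LieAlgebra.IsSolvable L by
    exact H (Module.finrank F L) L inferInstance inferInstance inferInstance le_rfl h
  clear h; clear! L
  intro n
  induction n with
  | zero =>
    intro L _ _ _ hle _
    have : Subsingleton L := by
      have : Module.finrank F L = 0 := by omega
      exact Module.finrank_zero_iff.mp this
    exact ⟨⟨0, Subsingleton.elim _ _⟩⟩
  | succ n IH =>
    intro L _ _ _ hle h
    by_contra hns
    -- basic nontriviality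
    have hnontriv : Nontrivial L := by
      by_contra h'
      apply hns
      have : Subsingleton L := not_nontrivial_iff_subsingleton.mp h'
      exact ⟨⟨0, Subsingleton.elim _ _⟩⟩
    -- every nonzero ideal yields a solvable quotient
    have hquot : ∀ I : LieIdeal F L, I ≠ ⊥ → LieAlgebra.IsSolvable (L ⧸ I) := by
      intro I hI
      haveI : FiniteDimensional F (L ⧸ I.toSubmodule) := inferInstance
      refine IH (L ⧸ I) _ _ ?_ ?_ (quot_maximal_isCIdeal I h)
      · exact inferInstance
      · have e1 : Module.finrank F (L ⧸ I) = Module.finrank F (L ⧸ I.toSubmodule) := rfl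
        have e2 := Submodule.finrank_quotient_add_finrank I.toSubmodule
        have e3 : Module.finrank F I.toSubmodule ≠ 0 := by
          intro h0
          apply hI
          have := Submodule.finrank_eq_zero.mp h0
          rw [← LieSubmodule.toSubmodule_inj, this, LieSubmodule.bot_toSubmodule]
        omega
    -- every nonzero ideal contains some term of the derived series
    have hder : ∀ I : LieIdeal F L, I ≠ ⊥ → ∃ k, LieAlgebra.derivedSeries F L k ≤ I := by
      intro I hI
      obtain ⟨k, hk⟩ := (LieAlgebra.isSolvable_iff (R := F) (L := L ⧸ I)).mp (hquot I hI)
      refine ⟨k, ?_⟩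
      set π : L →ₗ⁅F⁆ L ⧸ I := quotMk F I with hπ
      have hsurj : Function.Surjective π := Quot.mk_surjective
      have hmap := LieIdeal.derivedSeries_map_eq (f := π) k hsurj
      intro x hx
      have : π x ∈ LieIdeal.map π (LieAlgebra.derivedSeries F L k) := LieIdeal.mem_map hx
      rw [hmap, hk] at this
      rw [LieSubmodule.mem_bot] at this
      exact (LieSubmodule.Quotient.mk_eq_zero I).mp this
    -- stabilization of the derived series
    set dfun : ℕ → ℕ :=
      fun k => Module.finrank F (LieSubmodule.toSubmodule (LieAlgebra.derivedSeries F L k))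
      with hdfun
    obtain ⟨K, hK⟩ : ∃ K, dfun K = sInf (Set.range dfun) :=
      Nat.sInf_mem (Set.range_nonempty dfun)
    have hstab : ∀ j, K ≤ j → LieAlgebra.derivedSeries F L j = LieAlgebra.derivedSeries F L K := by
      intro j hj
      have hle1 : LieSubmodule.toSubmodule (LieAlgebra.derivedSeries F L j) ≤
          LieSubmodule.toSubmodule (LieAlgebra.derivedSeries F L K) :=
        LieAlgebra.derivedSeriesOfIdeal_antitone (I := (⊤ : LieIdeal F L)) hj
      have hle2 : dfun K ≤ dfun j := by
        rw [hK]
        exact Nat.sInf_le ⟨j, rfl⟩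
      rw [← LieSubmodule.toSubmodule_inj]
      exact Submodule.eq_of_le_of_finrank_le hle1 hle2
    set N : LieIdeal F L := LieAlgebra.derivedSeries F L K with hN
    have hNbot : N ≠ ⊥ := fun h0 => hns ((LieAlgebra.isSolvable_iff (R := F) (L := L)).mpr ⟨K, h0⟩)
    have hNN : (⁅N, N⁆ : LieIdeal F L) = N := by
      have h1 := hstab (K + 1) (Nat.le_succ K)
      have h2 := LieAlgebra.derivedSeriesOfIdeal_succ F L (⊤ : LieIdeal F L) K
      rw [LieAlgebra.derivedSeries_def] at h1
      rw [h2] at h1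
      exact h1
    have hNle : ∀ I : LieIdeal F L, I ≠ ⊥ → N ≤ I := by
      intro I hI
      obtain ⟨k, hk⟩ := hder I hI
      have h1 := hstab (max K k) (le_max_left K k)
      have h2 : LieAlgebra.derivedSeries F L (max K k) ≤ LieAlgebra.derivedSeries F L k :=
        LieAlgebra.derivedSeriesOfIdeal_antitone (I := (⊤ : LieIdeal F L)) (le_max_right K k)
      rw [h1] at h2
      exact h2.trans hk
    -- there is an element of N whose adjoint action is not nilpotent
    have hex : ∃ a ∈ N, ¬ IsNilpotent (LieAlgebra.ad F L a) := by
      by_contra hall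
      push_neg at hall
      haveI : FiniteDimensional F (↥N) := inferInstance
      have hnil : LieRing.IsNilpotent (↥N) := by
        rw [LieAlgebra.isNilpotent_iff_forall (R := F)]
        intro x
        obtain ⟨m, hm⟩ := hall (↑x) x.2
        refine ⟨m, ?_⟩
        have coe_eq : ∀ (j : ℕ) (y : ↥N),
            ((((LieAlgebra.ad F (↥N) x) ^ j) y : ↥N) : L) = ((LieAlgebra.ad F L (↑x)) ^ j) (↑y) := by
          intro j
          induction j with
          | zero => intro y; rfl
          | succ j ihj =>
            intro y
            have e1 : ((LieAlgebra.ad F (↥N) x) ^ (j+1)) y =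
                (LieAlgebra.ad F (↥N) x) (((LieAlgebra.ad F (↥N) x) ^ j) y) := by
              rw [pow_succ']; rfl
            have e2 : ((LieAlgebra.ad F L ↑x) ^ (j+1)) (↑y : L) =
                (LieAlgebra.ad F L ↑x) (((LieAlgebra.ad F L ↑x) ^ j) (↑y : L)) := by
              rw [pow_succ']; rfl
            rw [e1, e2, ← ihj y]
            rfl
        ext y
        have := coe_eq m y
        rw [hm] at this
        simpa using this
      haveI := hnil
      have hsolv : LieAlgebra.IsSolvable (↥N) := inferInstance
      have hDj : ∀ j : ℕ, LieAlgebra.derivedSeriesOfIdeal F L j N = N := by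
        intro j
        induction j with
        | zero => exact LieAlgebra.derivedSeriesOfIdeal_zero F L N
        | succ j ihj => rw [LieAlgebra.derivedSeriesOfIdeal_succ, ihj]; exact hNN
      obtain ⟨j, hj⟩ := (LieAlgebra.isSolvable_iff (R := F) (L := ↥N)).mp hsolv
      have hbot := (LieIdeal.derivedSeries_eq_bot_iff (I := N) j).mp hj
      rw [hDj j] at hbot
      exact hNbot hbot
    obtain ⟨a, haN, hfnil⟩ := hex
    set f : Module.End F L := LieAlgebra.ad F L a with hf
    set d : ℕ := Module.finrank F L with hd
    have hd1 : 1 ≤ d := by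
      rw [hd]
      exact Module.finrank_pos
    have hker_stab : ∀ m, d ≤ m → LinearMap.ker (f ^ m) = LinearMap.ker (f ^ d) :=
      fun m hm => Module.End.ker_pow_eq_ker_pow_finrank_of_le hm
    set E : LieSubalgebra F L := LieSubalgebra.engel F a with hE
    have hkerE : ∀ m : ℕ, LinearMap.ker (f ^ m) ≤ E.toSubmodule := by
      intro m x hx
      exact (LieSubalgebra.mem_engel_iff F a x).mpr ⟨m, hx⟩
    have hEtop : E ≠ ⊤ := by
      intro htop
      apply hfnil
      refine ⟨d, ?_⟩
      ext y
      have hy : y ∈ E := by rw [htop]; trivial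
      obtain ⟨m, hm⟩ := (LieSubalgebra.mem_engel_iff F a y).mp hy
      have : y ∈ LinearMap.ker (f ^ m) := hm
      have := Module.End.ker_pow_le_ker_pow_finrank f m this
      simpa using this
    obtain ⟨U, hUmax, hEU⟩ := exists_le_maximal E hEtop
    obtain ⟨C, hsupU, D, hD1, hD2⟩ := h U hUmax
    have hCbot : C ≠ ⊥ := by
      intro h0
      apply hUmax.1
      rw [h0] at hsupU
      have : U.toSubmodule = ⊤ := by
        rw [← hsupU]
        have : ((⊥ : LieIdeal F L) : Submodule F L) = ⊥ := rfl
        rw [this, sup_bot_eq]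
      rw [← LieSubalgebra.toSubmodule_inj]
      simpa using this
    have haC : a ∈ C := hNle C hCbot haN
    have haU : a ∈ U := hEU (LieSubalgebra.self_mem_engel F a)
    have haD : a ∈ D := hD2 a haU haC
    have hrange : LinearMap.range (f ^ d) ≤ LieSubmodule.toSubmodule D := by
      intro x hx
      obtain ⟨y, rfl⟩ := hx
      obtain ⟨e, he⟩ : ∃ e, d = e + 1 := ⟨d - 1, by omega⟩
      rw [he]
      have e1 : (f ^ (e + 1)) y = f ((f ^ e) y) := by rw [pow_succ']; rfl
      rw [e1]
      have : f ((f ^ e) y) = ⁅a, (f ^ e) y⁆ := rfl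
      rw [this, ← lie_skew]
      exact neg_mem (D.lie_mem haD)
    have hdisj : LinearMap.ker (f ^ d) ⊓ LinearMap.range (f ^ d) = ⊥ := by
      rw [eq_bot_iff]
      intro x hx
      obtain ⟨hxk, y, rfl⟩ := hx
      have : y ∈ LinearMap.ker (f ^ (d + d)) := by
        rw [LinearMap.mem_ker]
        have : (f ^ (d + d)) y = (f ^ d) ((f ^ d) y) := by rw [pow_add]; rfl
        rw [this]
        exact hxk
      rw [hker_stab (d + d) (by omega)] at this
      rw [Submodule.mem_bot]
      exact this
    have hFit : LinearMap.ker (f ^ d) ⊔ LinearMap.range (f ^ d) = ⊤ := by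
      apply Submodule.eq_top_of_finrank_eq
      have h1 := Submodule.finrank_sup_add_finrank_inf_eq
        (LinearMap.ker (f ^ d)) (LinearMap.range (f ^ d))
      have h2 := LinearMap.finrank_range_add_finrank_ker (f ^ d)
      rw [hdisj] at h1
      have h3 : Module.finrank F (↥(⊥ : Submodule F L)) = 0 := finrank_bot F L
      omega
    apply hUmax.1
    have hUtop : U.toSubmodule = ⊤ := by
      rw [eq_top_iff, ← hFit]
      apply sup_le
      · exact (hkerE d).trans ((LieSubalgebra.toSubmodule_le_toSubmodule E U).mpr hEU)
      · refine hrange.trans ?_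
        intro x hx
        exact hD1 x hx
    rw [← LieSubalgebra.toSubmodule_inj]
    simpa using hUtop

end Main

/-- All maximal subalgebras of `L` are c-ideals of `L` if and only if
`L` is solvable. -/
theorem forall_maximal_isCIdeal_iff_isSolvable {F L : Type*} [Field F] [LieRing L]
    [LieAlgebra F L] [FiniteDimensional F L] :
    (∀ M : LieSubalgebra F L, IsMaximalSubalgebra F M → IsCIdeal F M) ↔
      LieAlgebra.IsSolvable L := by
  constructor
  · exact isSolvable_of_forall_maximal_isCIdeal
  · intro hs M hM
    haveI := hs
    exact isCIdeal_of_isSolvable M hM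
end

section
/- Let L be a finite-dimensional Lie algebra over any field F, let A be an ideal of L, and let U be a subalgebra of L containing A such that U/A is a maximal nilpotent subalgebra of L/A. Then U = C + A where C is a maximal nilpotent subalgebra of L. -/
private lemma auxLieHomAdPow {F L L' : Type*} [Field F] [LieRing L] [LieAlgebra F L]
    [LieRing L'] [LieAlgebra F L'] (f : L →ₗ⁅F⁆ L') (x u : L) (n : ℕ) :
    f ((LieAlgebra.ad F L x ^ n) u) = (LieAlgebra.ad F L' (f x) ^ n) (f u) := by
  induction n with
  | zero => simp
  | succ n ih =>
    rw [pow_succ', pow_succ', Module.End.mul_apply, Module.End.mul_apply,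
      LieAlgebra.ad_apply, LieAlgebra.ad_apply, LieHom.map_lie, ih]

private lemma auxAdPowMem {F L : Type*} [Field F] [LieRing L] [LieAlgebra F L]
    (A : LieIdeal F L) (x : L) {u : L} (h : u ∈ A) (m : ℕ) :
    (LieAlgebra.ad F L x ^ m) u ∈ A := by
  induction m with
  | zero => simpa
  | succ m ih =>
    rw [pow_succ', Module.End.mul_apply, LieAlgebra.ad_apply]
    exact A.lie_mem ih

/-- If `A` is an ideal of `L` and `U/A` is a maximal nilpotent
subalgebra of `L/A`, then `U = C + A` where `C` is a maximal nilpotent subalgebra of `L`. -/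
theorem exists_maximalNilpotent_sup_of_quotient_maximalNilpotent {F L : Type*} [Field F]
    [LieRing L] [LieAlgebra F L] [FiniteDimensional F L]
    (A : LieIdeal F L) (U : LieSubalgebra F L) (hAU : ∀ x ∈ A, x ∈ U)
    (hU : IsMaximalNilpotentSubalgebra F (U.map (quotMk F A))) :
    ∃ C : LieSubalgebra F L, IsMaximalNilpotentSubalgebra F C ∧
      U.toSubmodule = C.toSubmodule ⊔ (A : Submodule F L) := by
  classical
  set g : L →ₗ⁅F⁆ L ⧸ A := quotMk F A with hgdef
  have hgzero : ∀ y : L, g y = 0 ↔ y ∈ A := fun y => LieSubmodule.Quotient.mk_eq_zero A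
  have hA_le_U : (A : Submodule F L) ≤ U.toSubmodule := fun a ha => hAU a ha
  -- Key nilpotency fact from the quotient
  have key : ∀ x ∈ U, ∃ k : ℕ, ∀ u ∈ U, (LieAlgebra.ad F L x ^ k) u ∈ A := by
    intro x hx
    have hxQ : g x ∈ U.map g := (LieSubalgebra.mem_map _ _ _).mpr ⟨x, hx, rfl⟩
    haveI := hU.1
    obtain ⟨k, hk⟩ : IsNilpotent (LieAlgebra.ad F (↥(U.map g)) ⟨g x, hxQ⟩) :=
      LieModule.isNilpotent_toEnd_of_isNilpotent F (↥(U.map g)) (↥(U.map g)) _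
    refine ⟨k, fun u hu => ?_⟩
    have huQ : g u ∈ U.map g := (LieSubalgebra.mem_map _ _ _).mpr ⟨u, hu, rfl⟩
    have h0 : (LieAlgebra.ad F (L ⧸ A) (g x) ^ k) (g u) = 0 := by
      have h1 := LinearMap.congr_fun hk (⟨g u, huQ⟩ : ↥(U.map g))
      rw [LinearMap.zero_apply] at h1
      have h2 := congrArg (Subtype.val) h1
      rwa [LieSubalgebra.coe_ad_pow] at h2
    rw [← auxLieHomAdPow g x u k] at h0
    exact (hgzero _).mp h0
  -- choose B minimal with B ≤ U and B + A = U
  set SS : Set (LieSubalgebra F L) :=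
    {B | B ≤ U ∧ B.toSubmodule ⊔ (A : Submodule F L) = U.toSubmodule} with hSS
  have hUS : U ∈ SS := ⟨le_rfl, sup_eq_left.mpr hA_le_U⟩
  have hranks : ((fun B : LieSubalgebra F L => Module.finrank F B.toSubmodule) '' SS).Nonempty :=
    ⟨_, U, hUS, rfl⟩
  obtain ⟨B, hBS, hBrank⟩ : ∃ B ∈ SS, Module.finrank F B.toSubmodule
      = sInf ((fun B : LieSubalgebra F L => Module.finrank F B.toSubmodule) '' SS) := by
    obtain ⟨B, hBS, h⟩ := Nat.sInf_mem hranks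
    exact ⟨B, hBS, h⟩
  have hBU : B ≤ U := hBS.1
  have hBsup : B.toSubmodule ⊔ (A : Submodule F L) = U.toSubmodule := hBS.2
  have hBmin : ∀ B' ∈ SS, B' ≤ B → B' = B := by
    intro B' hB' hle
    have h1 : Module.finrank F B.toSubmodule ≤ Module.finrank F B'.toSubmodule := by
      rw [hBrank]
      exact Nat.sInf_le ⟨B', hB', rfl⟩
    exact LieSubalgebra.toSubmodule_injective
      (Submodule.eq_of_le_of_finrank_le
        ((LieSubalgebra.toSubmodule_le_toSubmodule _ _).mpr hle) h1)
  -- B is nilpotent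
  have hBnil : LieRing.IsNilpotent B := by
    apply LieSubalgebra.isNilpotent_of_forall_le_engel
    intro x hx
    obtain ⟨k, hk⟩ := key x (hBU hx)
    set f : Module.End F B := LieAlgebra.ad F B ⟨x, hx⟩ with hfdef
    obtain ⟨N, hN⟩ := Filter.eventually_atTop.mp f.eventually_codisjoint_ker_pow_range_pow
    set N' := max N k with hN'def
    have hcod := hN N' (le_max_left _ _)
    rw [codisjoint_iff] at hcod
    set E : LieSubalgebra F L := LieSubalgebra.engel F x ⊓ B with hEdef
    have hEB : E ≤ B := inf_le_right
    have hES : E ∈ SS := by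
      refine ⟨hEB.trans hBU, le_antisymm
        (sup_le ((LieSubalgebra.toSubmodule_le_toSubmodule _ _).mpr (hEB.trans hBU)) hA_le_U) ?_⟩
      rw [← hBsup]
      refine sup_le ?_ le_sup_right
      intro b hb
      have hb' : b ∈ B := hb
      have hmem : (⟨b, hb'⟩ : B) ∈ (⊤ : Submodule F B) := trivial
      rw [← hcod] at hmem
      obtain ⟨y, hy, z, hz, hyz⟩ := Submodule.mem_sup.mp hmem
      have hyE : (y : L) ∈ E.toSubmodule := by
        show (y : L) ∈ E
        rw [hEdef, LieSubalgebra.mem_inf]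
        refine ⟨?_, y.2⟩
        rw [LieSubalgebra.mem_engel_iff]
        refine ⟨N', ?_⟩
        rw [LinearMap.mem_ker, hfdef] at hy
        have h2 := congrArg (Subtype.val) hy
        rwa [LieSubalgebra.coe_ad_pow] at h2
      have hzA : (z : L) ∈ (A : Submodule F L) := by
        obtain ⟨w, rfl⟩ := hz
        have h1 : ((f ^ N') w : L) = (LieAlgebra.ad F L x ^ N') (w : L) := by
          rw [hfdef]
          exact LieSubalgebra.coe_ad_pow F L B ⟨x, hx⟩ w N'
        have h2 : (LieAlgebra.ad F L x ^ N') (w : L)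
            = (LieAlgebra.ad F L x ^ (N' - k)) ((LieAlgebra.ad F L x ^ k) (w : L)) := by
          rw [← Module.End.mul_apply, ← pow_add, Nat.sub_add_cancel (le_max_right N k)]
        rw [h1, h2]
        exact auxAdPowMem A x (hk _ (hBU w.2)) _
      have hb_eq : b = (y : L) + (z : L) := by
        have := congrArg (Subtype.val) hyz
        exact this.symm
      rw [hb_eq]
      exact Submodule.add_mem_sup hyE hzA
    have hEeq : E = B := hBmin E hES hEB
    exact (le_of_eq hEeq.symm).trans inf_le_left
  -- choose C maximal nilpotent containing B
  set TT : Set (LieSubalgebra F L) := {C | B ≤ C ∧ LieRing.IsNilpotent C} with hTT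
  have hBT : B ∈ TT := ⟨le_rfl, hBnil⟩
  have hne2 : ((fun C : LieSubalgebra F L => Module.finrank F C.toSubmodule) '' TT).Nonempty :=
    ⟨_, B, hBT, rfl⟩
  have hbdd : BddAbove ((fun C : LieSubalgebra F L => Module.finrank F C.toSubmodule) '' TT) := by
    refine ⟨Module.finrank F L, ?_⟩
    rintro _ ⟨C, _, rfl⟩
    exact Submodule.finrank_le _
  obtain ⟨C, hCT, hCrank⟩ : ∃ C ∈ TT, Module.finrank F C.toSubmodule
      = sSup ((fun C : LieSubalgebra F L => Module.finrank F C.toSubmodule) '' TT) := by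
    obtain ⟨C, h1, h2⟩ := Nat.sSup_mem hne2 hbdd
    exact ⟨C, h1, h2⟩
  have hBC : B ≤ C := hCT.1
  have hCnil : LieRing.IsNilpotent C := hCT.2
  have hCmax : ∀ D : LieSubalgebra F L, LieRing.IsNilpotent D → C ≤ D → C = D := by
    intro D hD hCD
    have hDT : D ∈ TT := ⟨hBC.trans hCD, hD⟩
    have hle2 : Module.finrank F D.toSubmodule ≤ Module.finrank F C.toSubmodule := by
      rw [hCrank]
      exact le_csSup hbdd ⟨D, hDT, rfl⟩
    exact LieSubalgebra.toSubmodule_injective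
      (Submodule.eq_of_le_of_finrank_le
        ((LieSubalgebra.toSubmodule_le_toSubmodule _ _).mpr hCD) hle2)
  -- the image of C is nilpotent
  have hmapnil : LieRing.IsNilpotent (C.map g) := by
    haveI : LieRing.IsNilpotent C := hCnil
    have h1 : (g.comp C.incl).range = C.map g := by
      ext y
      rw [LieHom.mem_range, LieSubalgebra.mem_map]
      constructor
      · rintro ⟨z, rfl⟩
        exact ⟨z, z.2, rfl⟩
      · rintro ⟨z, hz, rfl⟩
        exact ⟨⟨z, hz⟩, rfl⟩
    rw [← h1]
    exact (g.comp C.incl).isNilpotent_range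
  -- U.map g ≤ C.map g, hence equal by maximality
  have hle3 : U.map g ≤ C.map g := by
    intro q hq
    obtain ⟨u, hu, rfl⟩ := (LieSubalgebra.mem_map _ _ _).mp hq
    have hu2 : u ∈ B.toSubmodule ⊔ (A : Submodule F L) := by rw [hBsup]; exact hu
    obtain ⟨b, hb, a, ha, rfl⟩ := Submodule.mem_sup.mp hu2
    have hga : g a = 0 := (hgzero a).mpr ha
    have : g (b + a) = g b := by
      rw [show g (b + a) = g b + g a from (g : L →ₗ[F] L ⧸ A).map_add b a, hga, add_zero]
    rw [this]
    exact (LieSubalgebra.mem_map _ _ _).mpr ⟨b, hBC hb, rfl⟩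
  have hmap : U.map g = C.map g := hU.2 _ hmapnil hle3
  refine ⟨C, ⟨hCnil, hCmax⟩, ?_⟩
  apply le_antisymm
  · intro u hu
    have h1 : g u ∈ C.map g := by
      rw [← hmap]
      exact (LieSubalgebra.mem_map _ _ _).mpr ⟨u, hu, rfl⟩
    obtain ⟨c, hc, hcu⟩ := (LieSubalgebra.mem_map _ _ _).mp h1
    have h2 : u - c ∈ A := by
      rw [← hgzero, show g (u - c) = g u - g c from (g : L →ₗ[F] L ⧸ A).map_sub u c, hcu,
        sub_self]
    have h3 : u = c + (u - c) := by abel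
    rw [h3]
    exact Submodule.add_mem_sup hc h2
  · refine sup_le ?_ hA_le_U
    intro c hc
    have h1 : g c ∈ U.map g := by
      rw [hmap]
      exact (LieSubalgebra.mem_map _ _ _).mpr ⟨c, hc, rfl⟩
    obtain ⟨u, hu, huc⟩ := (LieSubalgebra.mem_map _ _ _).mp h1
    have h2 : c - u ∈ A := by
      rw [← hgzero, show g (c - u) = g c - g u from (g : L →ₗ[F] L ⧸ A).map_sub c u, huc,
        sub_self]
    have h3 : c = u + (c - u) := by abel
    rw [h3]
    exact U.toSubmodule.add_mem hu (hA_le_U h2)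
end

section
/- Let L be a finite-dimensional Lie algebra over any field F in which every maximal subalgebra of each maximal nilpotent subalgebra of L is a c-ideal of L, and suppose that A is a minimal abelian ideal of L and M is a core-free maximal subalgebra of L (that is, the largest ideal of L contained in M is zero). Then A is one-dimensional. -/
/-- Suppose every maximal subalgebra of each maximal nilpotent
subalgebra of `L` is a c-ideal of `L`, `A` is a minimal abelian ideal of `L`, and `M` is a
core-free maximal subalgebra of `L`. Then `A` is one-dimensional. -/
theorem finrank_eq_one_of_minimalAbelian {F L : Type*} [Field F] [LieRing L]
    [LieAlgebra F L] [FiniteDimensional F L]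
    (h : ∀ C : LieSubalgebra F L, IsMaximalNilpotentSubalgebra F C →
      ∀ B : LieSubalgebra F L, IsMaximalSubalgebraOf F B C → IsCIdeal F B)
    (A : LieIdeal F L) (hA : IsMinimalAbelianIdeal F A)
    (M : LieSubalgebra F L) (hM : IsMaximalSubalgebra F M)
    (hMcf : ∀ I : LieIdeal F L, (∀ x ∈ I, x ∈ M) → I = ⊥) :
    Module.finrank F A = 1 := by
  classical
  obtain ⟨hAne, hAab, hAmin⟩ := hA
  obtain ⟨hMne, hMmax⟩ := hM
  -- brackets of elements of A vanish
  have hab : ∀ x ∈ A, ∀ y ∈ A, ⁅x, y⁆ = (0 : L) := by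
    intro x hx y hy
    have h1 : (⁅(⟨x, hx⟩ : A), (⟨y, hy⟩ : A)⁆ : A) = 0 := trivial_lie_zero _ _ _ _
    have h2 : (↑(⁅(⟨x, hx⟩ : A), (⟨y, hy⟩ : A)⁆ : A) : L) = ⁅x, y⁆ := rfl
    rw [h1] at h2; exact h2.symm.trans rfl
  -- A is not contained in M
  have hAnotM : ∃ x ∈ A, x ∉ M := by
    by_contra hcon
    push_neg at hcon
    exact hAne (hMcf A hcon)
  -- L = A + M
  have htop : (A : Submodule F L) ⊔ M.toSubmodule = ⊤ := by
    let S : LieSubalgebra F L :=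
      { toSubmodule := (A : Submodule F L) ⊔ M.toSubmodule
        lie_mem' := by
          intro x y hx hy
          replace hx : x ∈ (A : Submodule F L) ⊔ M.toSubmodule := hx
          replace hy : y ∈ (A : Submodule F L) ⊔ M.toSubmodule := hy
          obtain ⟨a, ha, m, hm, rfl⟩ := Submodule.mem_sup.mp hx
          obtain ⟨a', ha', m', hm', rfl⟩ := Submodule.mem_sup.mp hy
          show ⁅a + m, a' + m'⁆ ∈ (A : Submodule F L) ⊔ M.toSubmodule
          have e : ⁅a + m, a' + m'⁆ = (⁅a, a' + m'⁆ + ⁅m, a'⁆) + ⁅m, m'⁆ := by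
            simp only [add_lie, lie_add]; abel
          rw [e]
          exact Submodule.add_mem _
            (Submodule.mem_sup_left (Submodule.add_mem _
              (lie_mem_left F L A _ _ ha) (lie_mem_right F L A _ _ ha')))
            (Submodule.mem_sup_right (M.lie_mem hm hm')) }
    have hMS : M ≤ S := fun x hx => Submodule.mem_sup_right hx
    obtain ⟨w, hwA, hwM⟩ := hAnotM
    have hMneS : M ≠ S := by
      intro hEq
      apply hwM
      have : w ∈ S := Submodule.mem_sup_left hwA
      rw [hEq]; exact this
    have hStop : S = ⊤ := hMmax S (lt_of_le_of_ne hMS hMneS)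
    have := congrArg LieSubalgebra.toSubmodule hStop
    rw [LieSubalgebra.top_toSubmodule] at this
    exact this
  have hdecomp : ∀ x : L, ∃ a ∈ A, ∃ m ∈ M, x = a + m := by
    intro x
    have hx : x ∈ (A : Submodule F L) ⊔ M.toSubmodule := htop ▸ Submodule.mem_top
    obtain ⟨a, ha, m, hm, hsum⟩ := Submodule.mem_sup.mp hx
    exact ⟨a, ha, m, hm, hsum.symm⟩
  -- A ∩ M = 0
  have hAMbot : ∀ x ∈ A, x ∈ M → x = (0 : L) := by
    intro x hxA hxM
    let J : LieIdeal F L :=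
      { toSubmodule := (A : Submodule F L) ⊓ M.toSubmodule
        lie_mem := by
          intro z y hy
          replace hy : y ∈ (A : Submodule F L) ⊓ M.toSubmodule := hy
          rw [Submodule.mem_inf] at hy
          obtain ⟨hyA, hyM⟩ := hy
          show ⁅z, y⁆ ∈ (A : Submodule F L) ⊓ M.toSubmodule
          rw [Submodule.mem_inf]
          obtain ⟨a, ha, m, hm, rfl⟩ := hdecomp z
          refine ⟨lie_mem_right F L A _ _ hyA, ?_⟩
          have e : ⁅a + m, y⁆ = ⁅m, y⁆ := by
            rw [add_lie, hab a ha y hyA, zero_add]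
          rw [e]; exact M.lie_mem hm hyM }
    have hJ : J = ⊥ := hMcf J (fun z hz => (Submodule.mem_inf.mp hz).2)
    have hxJ : x ∈ J := Submodule.mem_inf.mpr ⟨hxA, hxM⟩
    rwa [hJ, LieSubmodule.mem_bot] at hxJ
  -- centralizer of A
  let Cent : Submodule F L :=
    { carrier := {x | ∀ a ∈ A, ⁅a, x⁆ = 0}
      add_mem' := by
        intro p q hp hq a ha
        rw [lie_add, hp a ha, hq a ha, add_zero]
      zero_mem' := by intro a _; exact lie_zero a
      smul_mem' := by
        intro t p hp a ha
        rw [lie_smul, hp a ha, smul_zero] }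
  have hACent : (A : Submodule F L) ≤ Cent := fun x hx a ha => hab a ha x hx
  have hCentM : ∀ x ∈ Cent, x ∈ M → x = (0 : L) := by
    intro x hx hxM
    let J2 : LieIdeal F L :=
      { toSubmodule := Cent ⊓ M.toSubmodule
        lie_mem := by
          intro z y hy
          replace hy : y ∈ Cent ⊓ M.toSubmodule := hy
          rw [Submodule.mem_inf] at hy
          obtain ⟨hyC, hyM⟩ := hy
          show ⁅z, y⁆ ∈ Cent ⊓ M.toSubmodule
          rw [Submodule.mem_inf]
          constructor
          · intro a ha
            have e : ⁅a, ⁅z, y⁆⁆ = ⁅⁅a, z⁆, y⁆ + ⁅z, ⁅a, y⁆⁆ := leibniz_lie a z y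
            rw [hyC a ha, lie_zero, add_zero] at e
            rw [e]
            exact hyC _ (lie_mem_left F L A _ _ ha)
          · obtain ⟨a, ha, m, hm, rfl⟩ := hdecomp z
            have e : ⁅a + m, y⁆ = ⁅m, y⁆ := by
              rw [add_lie, hyC a ha, zero_add]
            rw [e]; exact M.lie_mem hm hyM }
    have hJ : J2 = ⊥ := hMcf J2 (fun z hz => (Submodule.mem_inf.mp hz).2)
    have hxJ : x ∈ J2 := Submodule.mem_inf.mpr ⟨hx, hxM⟩
    rwa [hJ, LieSubmodule.mem_bot] at hxJ
  have hCentA : Cent ≤ (A : Submodule F L) := by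
    intro x hx
    obtain ⟨a, ha, m, hm, rfl⟩ := hdecomp x
    have hmCent : m ∈ Cent := by
      have hsub : (a + m) - a ∈ Cent := Submodule.sub_mem _ hx (hACent ha)
      simpa using hsub
    have hm0 : m = 0 := hCentM m hmCent hm
    rw [hm0, add_zero]
    exact ha
  -- a maximal nilpotent subalgebra containing A
  haveI hAabS : IsLieAbelian ((A : LieSubalgebra F L) : LieSubalgebra F L) := hAab
  have hAnil : LieRing.IsNilpotent (A : LieSubalgebra F L) := inferInstance
  let T : Set (Submodule F L) := {p | ∃ D : LieSubalgebra F L,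
    LieRing.IsNilpotent D ∧ (A : Submodule F L) ≤ D.toSubmodule ∧ D.toSubmodule = p}
  have hTne : T.Nonempty := ⟨((A : LieSubalgebra F L)).toSubmodule,
    (A : LieSubalgebra F L), hAnil, le_rfl, rfl⟩
  obtain ⟨p, hpT, hpmax⟩ := WellFounded.has_min
    (wellFounded_gt : WellFounded ((· > ·) : Submodule F L → Submodule F L → Prop)) T hTne
  obtain ⟨C, hCnil, hACle, hCp⟩ := hpT
  have hAC : (A : Submodule F L) ≤ C.toSubmodule := hACle
  have hCmax : IsMaximalNilpotentSubalgebra F C := by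
    refine ⟨hCnil, ?_⟩
    intro D hDnil hCD
    have hDT : D.toSubmodule ∈ T := ⟨D, hDnil, le_trans hAC hCD, rfl⟩
    have hnot := hpmax _ hDT
    rw [← hCp] at hnot
    have hle : C.toSubmodule ≤ D.toSubmodule := hCD
    have heq : C.toSubmodule = D.toSubmodule := by
      by_contra hne
      exact hnot (lt_of_le_of_ne hle hne)
    ext x
    constructor
    · intro hx; exact (heq ▸ (hx : x ∈ C.toSubmodule) : x ∈ D.toSubmodule)
    · intro hx; exact (heq ▸ (hx : x ∈ D.toSubmodule) : x ∈ C.toSubmodule)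
  -- spans
  let ι : C →ₗ[F] L := (C.incl : C →ₗ⁅F⁆ L).toLinearMap
  have hι : ∀ x : C, ι x = ↑x := fun _ => rfl
  let W : Submodule F L := C.toSubmodule ⊓ M.toSubmodule
  let K : Submodule F L := Submodule.span F {z : L | ∃ x ∈ C, ∃ y ∈ C, ⁅x, y⁆ = z}
  let lieAW : Submodule F L := Submodule.span F {z : L | ∃ p ∈ A, ∃ q ∈ W, ⁅p, q⁆ = z}
  let W2 : Submodule F L := Submodule.span F {z : L | ∃ p ∈ W, ∃ q ∈ W, ⁅p, q⁆ = z}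
  have hKC : K ≤ C.toSubmodule := by
    rw [Submodule.span_le]; rintro z ⟨x, hx, y, hy, rfl⟩; exact C.lie_mem hx hy
  have hlieAWA : lieAW ≤ (A : Submodule F L) := by
    rw [Submodule.span_le]; rintro z ⟨q, hq, r, hr, rfl⟩; exact lie_mem_left F L A _ _ hq
  have hW2M : W2 ≤ M.toSubmodule := by
    rw [Submodule.span_le]; rintro z ⟨q, hq, r, hr, rfl⟩
    exact M.lie_mem (Submodule.mem_inf.mp hq).2 (Submodule.mem_inf.mp hr).2
  have hKle : K ≤ lieAW ⊔ W2 := by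
    rw [Submodule.span_le]
    rintro z ⟨x, hx, y, hy, rfl⟩
    obtain ⟨a, ha, m, hm, rfl⟩ := hdecomp x
    obtain ⟨a', ha', m', hm', rfl⟩ := hdecomp y
    have hmC : m ∈ C.toSubmodule := by
      have hsub : (a + m) - a ∈ C.toSubmodule := Submodule.sub_mem _ hx (hAC ha)
      simpa using hsub
    have hm'C : m' ∈ C.toSubmodule := by
      have hsub : (a' + m') - a' ∈ C.toSubmodule := Submodule.sub_mem _ hy (hAC ha')
      simpa using hsub
    have e : ⁅a + m, a' + m'⁆ = (⁅a, m'⁆ + ⁅m, a'⁆) + ⁅m, m'⁆ := by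
      simp only [add_lie, lie_add]
      rw [hab a ha a' ha']; abel
    show ⁅a + m, a' + m'⁆ ∈ lieAW ⊔ W2
    rw [e]
    refine Submodule.add_mem _ (Submodule.add_mem _ ?_ ?_) ?_
    · exact Submodule.mem_sup_left (Submodule.subset_span
        ⟨a, ha, m', Submodule.mem_inf.mpr ⟨hm'C, hm'⟩, rfl⟩)
    · rw [← lie_skew]
      exact Submodule.neg_mem _ (Submodule.mem_sup_left (Submodule.subset_span
        ⟨a', ha', m, Submodule.mem_inf.mpr ⟨hmC, hm⟩, rfl⟩))
    · exact Submodule.mem_sup_right (Submodule.subset_span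
        ⟨m, Submodule.mem_inf.mpr ⟨hmC, hm⟩, m', Submodule.mem_inf.mpr ⟨hm'C, hm'⟩, rfl⟩)
  have hAKle : (A : Submodule F L) ⊓ K ≤ lieAW := by
    have h1 : (A : Submodule F L) ⊓ K ≤ (lieAW ⊔ W2) ⊓ (A : Submodule F L) := by
      intro x hx
      rw [Submodule.mem_inf] at hx ⊢
      exact ⟨hKle hx.2, hx.1⟩
    have h2 : (lieAW ⊔ W2) ⊓ (A : Submodule F L) = lieAW ⊔ (W2 ⊓ (A : Submodule F L)) :=
      sup_inf_assoc_of_le _ hlieAWA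
    have h3 : W2 ⊓ (A : Submodule F L) ≤ lieAW := by
      intro x hx
      rw [Submodule.mem_inf] at hx
      have hx0 : x = 0 := hAMbot x hx.2 (hW2M hx.1)
      rw [hx0]; exact Submodule.zero_mem _
    calc (A : Submodule F L) ⊓ K ≤ (lieAW ⊔ W2) ⊓ (A : Submodule F L) := h1
      _ = lieAW ⊔ (W2 ⊓ (A : Submodule F L)) := h2
      _ ≤ lieAW ⊔ lieAW := sup_le_sup_left h3 _
      _ = lieAW := sup_idem _
  -- A is not contained in lieAW (else nilpotency of C would force A = 0)
  have hAnotle : ¬ (A : Submodule F L) ≤ lieAW := by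
    intro hle
    let I : LieIdeal F C :=
      { toSubmodule := Submodule.comap ι (A : Submodule F L)
        lie_mem := by
          intro x y hy
          replace hy : y ∈ Submodule.comap ι (A : Submodule F L) := hy
          show ⁅x, y⁆ ∈ Submodule.comap ι (A : Submodule F L)
          rw [Submodule.mem_comap] at hy ⊢
          rw [hι] at hy ⊢
          rw [LieSubalgebra.coe_bracket]
          exact lie_mem_right F L A _ _ hy }
    have hmemI : ∀ x : C, x ∈ I ↔ (↑x : L) ∈ A := fun x => Iff.rfl
    have hlieAWle : lieAW ≤
        Submodule.map ι ((⁅(⊤ : LieIdeal F C), I⁆ : LieIdeal F C) : Submodule F C) := by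
      rw [Submodule.span_le]
      rintro z ⟨q, hq, r, hr, rfl⟩
      have hqC : q ∈ C.toSubmodule := hAC hq
      have hrC : r ∈ C.toSubmodule := (Submodule.mem_inf.mp hr).1
      have hmem : ⁅(⟨r, hrC⟩ : C), (⟨q, hqC⟩ : C)⁆ ∈ ⁅(⊤ : LieIdeal F C), I⁆ :=
        LieSubmodule.lie_mem_lie (LieSubmodule.mem_top _) ((hmemI _).mpr hq)
      have himg : ⁅r, q⁆ ∈
          Submodule.map ι ((⁅(⊤ : LieIdeal F C), I⁆ : LieIdeal F C) : Submodule F C) :=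
        ⟨_, hmem, rfl⟩
      show ⁅q, r⁆ ∈ _
      rw [← lie_skew]
      exact Submodule.neg_mem _ himg
    have hII : I ≤ ⁅(⊤ : LieIdeal F C), I⁆ := by
      intro x hx
      have hxA : (↑x : L) ∈ A := (hmemI _).mp hx
      obtain ⟨y, hy, hyx⟩ := hlieAWle (hle hxA)
      have hyeq : y = x := by
        apply Subtype.coe_injective
        exact hyx
      rw [← hyeq]
      exact hy
    have hlcs : ∀ n, I ≤ LieModule.lowerCentralSeries F C C n := by
      intro n
      induction n with
      | zero => exact le_top
      | succ n ih =>
        rw [LieModule.lowerCentralSeries_succ]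
        exact le_trans hII (LieSubmodule.mono_lie_right _ ih)
    obtain ⟨k, hk⟩ := (LieModule.isNilpotent_iff F C C).mp hCnil
    have hIbot : I = ⊥ := le_bot_iff.mp (hk ▸ hlcs k)
    apply hAne
    rw [LieSubmodule.eq_bot_iff]
    intro m hm
    have hmC : m ∈ C.toSubmodule := hAC hm
    have hmI : (⟨m, hmC⟩ : C) ∈ I := (hmemI _).mpr hm
    rw [hIbot, LieSubmodule.mem_bot] at hmI
    exact congrArg Subtype.val hmI
  obtain ⟨a, haA, halie⟩ := SetLike.not_le_iff_exists.mp hAnotle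
  have haK : a ∉ K := fun hc => halie (hAKle (Submodule.mem_inf.mpr ⟨haA, hc⟩))
  have haC : a ∈ C.toSubmodule := hAC haA
  -- a linear functional on C vanishing on K but not at a
  let K' : Submodule F C := Submodule.comap ι K
  have ha'K' : (⟨a, haC⟩ : C) ∉ K' := fun hc => haK hc
  obtain ⟨φ, hφ⟩ : ∃ φ : Module.Dual F (C ⧸ K'), φ (K'.mkQ ⟨a, haC⟩) ≠ 0 := by
    by_contra hcon
    push_neg at hcon
    have := (Module.forall_dual_apply_eq_zero_iff F (K'.mkQ ⟨a, haC⟩)).mp hcon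
    rw [Submodule.mkQ_apply, Submodule.Quotient.mk_eq_zero] at this
    exact ha'K' this
  let f : C →ₗ[F] F := φ ∘ₗ K'.mkQ
  have hfK : ∀ x : C, x ∈ K' → f x = 0 := by
    intro x hx
    have h0 : K'.mkQ x = 0 := by
      rw [Submodule.mkQ_apply, Submodule.Quotient.mk_eq_zero]; exact hx
    show φ (K'.mkQ x) = 0
    rw [h0, map_zero]
  have hfa : f ⟨a, haC⟩ ≠ 0 := hφ
  let Bsm : Submodule F L := Submodule.map ι (LinearMap.ker f)
  have hBsmC : Bsm ≤ C.toSubmodule := by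
    rintro x ⟨y, hy, rfl⟩; exact y.2
  have hKB : K ≤ Bsm := by
    intro z hz
    have hzC : z ∈ C.toSubmodule := hKC hz
    exact ⟨⟨z, hzC⟩, LinearMap.mem_ker.mpr (hfK _ hz), rfl⟩
  have haB : a ∉ Bsm := by
    rintro ⟨y, hy, hyx⟩
    have hyeq : y = ⟨a, haC⟩ := Subtype.coe_injective hyx
    rw [hyeq] at hy
    exact hfa (LinearMap.mem_ker.mp hy)
  let B : LieSubalgebra F L :=
    { toSubmodule := Bsm
      lie_mem' := by
        intro x y hx hy
        exact hKB (Submodule.subset_span ⟨x, hBsmC hx, y, hBsmC hy, rfl⟩) }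
  have hBC : B ≤ C := fun x hx => hBsmC hx
  have hBltC : B < C := by
    refine lt_of_le_of_ne hBC ?_
    intro hEq
    apply haB
    show a ∈ B
    rw [hEq]
    exact haC
  have hBmaxC : IsMaximalSubalgebraOf F B C := by
    refine ⟨hBltC, ?_⟩
    intro K'' hBK hK''C
    obtain ⟨x, hxK, hxB⟩ := SetLike.exists_of_lt hBK
    have hxC : x ∈ C.toSubmodule := hK''C hxK
    have hfx : f ⟨x, hxC⟩ ≠ 0 := by
      intro h0
      exact hxB (show x ∈ Bsm from ⟨⟨x, hxC⟩, LinearMap.mem_ker.mpr h0, rfl⟩)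
    apply le_antisymm hK''C
    intro c hc
    have hcC : c ∈ C.toSubmodule := hc
    set t : F := f ⟨c, hcC⟩ / f ⟨x, hxC⟩ with ht
    have hker : (⟨c, hcC⟩ : C) - t • (⟨x, hxC⟩ : C) ∈ LinearMap.ker f := by
      rw [LinearMap.mem_ker, map_sub, map_smul, smul_eq_mul, ht,
        div_mul_cancel₀ _ hfx, sub_self]
    have hcB : c - t • x ∈ Bsm := ⟨_, hker, rfl⟩
    have h1 : c - t • x ∈ K'' := hBK.le hcB
    have h2 : t • x ∈ K'' := K''.toSubmodule.smul_mem t hxK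
    have h3 : (c - t • x) + t • x ∈ K'' := K''.toSubmodule.add_mem h1 h2
    simpa using h3
  -- apply the c-ideal hypothesis
  obtain ⟨C', hsup, D, hDB, hBD⟩ := h C hCmax B hBmaxC
  rcases hAmin (A ⊓ C') inf_le_left with hbot | hAA
  · -- A ∩ C' = 0 forces C' = 0, impossible
    exfalso
    have hC'A : ∀ x ∈ C', x ∈ (A : Submodule F L) := by
      intro x hx
      apply hCentA
      intro a'' ha''
      have hmem : ⁅a'', x⁆ ∈ A ⊓ C' := (LieSubmodule.mem_inf _ _ _).mpr
        ⟨lie_mem_left F L A _ _ ha'', lie_mem_right F L C' _ _ hx⟩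
      rw [hbot, LieSubmodule.mem_bot] at hmem
      exact hmem
    have hC'bot : ∀ x ∈ C', x = (0 : L) := by
      intro x hx
      have hmem : x ∈ A ⊓ C' := (LieSubmodule.mem_inf _ _ _).mpr ⟨hC'A x hx, hx⟩
      rwa [hbot, LieSubmodule.mem_bot] at hmem
    apply haB
    have hamem : a ∈ B.toSubmodule ⊔ (C' : Submodule F L) := hsup ▸ Submodule.mem_top
    obtain ⟨b, hb, cx, hcx, hsumeq⟩ := Submodule.mem_sup.mp hamem
    have hcx0 : cx = 0 := hC'bot cx hcx
    rw [hcx0, add_zero] at hsumeq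
    rw [← hsumeq]
    exact hb
  · -- A ≤ C', hence A ∩ B = 0 and dim A = 1
    have hAinC' : ∀ x ∈ A, x ∈ C' := by
      intro x hx
      have hmem : x ∈ A ⊓ C' := by rw [hAA]; exact hx
      exact ((LieSubmodule.mem_inf _ _ _).mp hmem).2
    have hADbot : A ⊓ D = ⊥ := by
      rcases hAmin (A ⊓ D) inf_le_left with hb | hA2
      · exact hb
      · exfalso
        have haD : a ∈ D := by
          have hmem : a ∈ A ⊓ D := by rw [hA2]; exact haA
          exact ((LieSubmodule.mem_inf _ _ _).mp hmem).2
        exact haB (hDB a haD)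
    have hABz : ∀ x ∈ A, x ∈ Bsm → x = (0 : L) := by
      intro x hxA hxB
      have hxD : x ∈ D := hBD x hxB (hAinC' x hxA)
      have hmem : x ∈ A ⊓ D := (LieSubmodule.mem_inf _ _ _).mpr ⟨hxA, hxD⟩
      rwa [hADbot, LieSubmodule.mem_bot] at hmem
    let φA : A →ₗ[F] F :=
      { toFun := fun x => f ⟨x.1, hAC x.2⟩
        map_add' := by
          intro x y
          have e : (⟨(x + y).1, hAC (x + y).2⟩ : C)
              = ⟨x.1, hAC x.2⟩ + ⟨y.1, hAC y.2⟩ := Subtype.ext rfl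
          show f ⟨(x + y).1, hAC (x + y).2⟩ = _
          rw [e, map_add]
        map_smul' := by
          intro t x
          have e : (⟨(t • x).1, hAC (t • x).2⟩ : C)
              = t • (⟨x.1, hAC x.2⟩ : C) := Subtype.ext rfl
          show f ⟨(t • x).1, hAC (t • x).2⟩ = _
          rw [e, map_smul]
          rfl }
    have hinj : Function.Injective φA := by
      rw [← LinearMap.ker_eq_bot, LinearMap.ker_eq_bot']
      intro x hx0
      have hxB : (x : L) ∈ Bsm := ⟨⟨x.1, hAC x.2⟩, LinearMap.mem_ker.mpr hx0, rfl⟩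
      exact Subtype.ext (hABz x.1 x.2 hxB)
    have h1 : Module.finrank F A ≤ 1 := by
      have hle := LinearMap.finrank_le_finrank_of_injective hinj
      simpa using hle
    have h2 : 0 < Module.finrank F A := by
      obtain ⟨w, hwA, hwne⟩ : ∃ w ∈ A, w ≠ (0 : L) := by
        by_contra hcon
        push_neg at hcon
        exact hAne ((LieSubmodule.eq_bot_iff A).mpr hcon)
      haveI : Nontrivial A :=
        ⟨⟨⟨w, hwA⟩, 0, by simp [Subtype.ext_iff, hwne]⟩⟩
      exact Module.finrank_pos
    omega
end

section
/- Let L be a finite-dimensional Lie algebra over any field F and let x be a nonzero element of L spanning a one-dimensional subalgebra Fx. Then Fx is a c-ideal of L if and only if Fx is an ideal of L or x ∉ L², where L² = [L,L] is the derived subalgebra of L. -/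
/-- For `0 ≠ x ∈ L`, the one-dimensional subalgebra `Fx` is a c-ideal
of `L` if and only if `Fx` is an ideal of `L` or `x ∉ L² = [L,L]`. -/
theorem lineSpan_isCIdeal_iff {F L : Type*} [Field F] [LieRing L] [LieAlgebra F L]
    [FiniteDimensional F L] (x : L) (hx : x ≠ 0) :
    IsCIdeal F (lineSpan F x) ↔
      ((∀ y : L, ∀ b ∈ lineSpan F x, ⁅y, b⁆ ∈ lineSpan F x) ∨
        x ∉ LieAlgebra.derivedSeries F L 1) := by
  constructor
  · rintro ⟨C, hsup, D, hDB, hBCD⟩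
    by_cases hxC : x ∈ C
    · left
      have hxB : x ∈ lineSpan F x := Submodule.mem_span_singleton_self x
      have hxD : x ∈ D := hBCD x hxB hxC
      intro y b hb
      have hb' : b ∈ Submodule.span F {x} := hb
      rw [Submodule.mem_span_singleton] at hb'
      obtain ⟨c, rfl⟩ := hb'
      exact hDB _ (D.lie_mem (D.smul_mem c hxD))
    · right
      intro hx2
      apply hxC
      have hle : LieAlgebra.derivedSeries F L 1 ≤ C := by
        rw [LieAlgebra.derivedSeries_def, LieAlgebra.derivedSeriesOfIdeal_succ,
          LieAlgebra.derivedSeriesOfIdeal_zero, LieSubmodule.lieIdeal_oper_eq_span]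
        apply LieSubmodule.lieSpan_le.mpr
        rintro m ⟨⟨a, -⟩, ⟨b, -⟩, rfl⟩
        have ha : a ∈ (lineSpan F x).toSubmodule ⊔ (C : Submodule F L) :=
          hsup.ge Submodule.mem_top
        have hb : b ∈ (lineSpan F x).toSubmodule ⊔ (C : Submodule F L) :=
          hsup.ge Submodule.mem_top
        obtain ⟨b1, hb1, c1, hc1, rfl⟩ := Submodule.mem_sup.mp ha
        obtain ⟨b2, hb2, c2, hc2, rfl⟩ := Submodule.mem_sup.mp hb
        have hb1' : b1 ∈ Submodule.span F {x} := hb1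
        have hb2' : b2 ∈ Submodule.span F {x} := hb2
        rw [Submodule.mem_span_singleton] at hb1' hb2'
        obtain ⟨s, rfl⟩ := hb1'
        obtain ⟨t, rfl⟩ := hb2'
        show ⁅s • x + c1, t • x + c2⁆ ∈ C
        have h11 : ⁅s • x, t • x⁆ = 0 := by
          rw [smul_lie, lie_smul, lie_self]; simp
        rw [lie_add, add_lie, h11, zero_add]
        refine C.add_mem ?_ (C.lie_mem hc2)
        rw [← lie_skew]
        exact C.neg_mem (C.lie_mem hc1)
      exact hle hx2
  · rintro (h | h)
    · exact ⟨⊤, by simp, ⟨(lineSpan F x).toSubmodule, fun {y m} hm => h y m hm⟩,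
        fun z hz => hz, fun z hz _ => hz⟩
    · set V : Submodule F L := (LieAlgebra.derivedSeries F L 1 : Submodule F L) with hV
      obtain ⟨U, hU⟩ := Submodule.exists_isCompl
        (Submodule.span F {Submodule.Quotient.mk (p := V) x})
      have hxU : Submodule.Quotient.mk (p := V) x ∉ U := by
        intro hmem
        have : Submodule.Quotient.mk (p := V) x ∈
            Submodule.span F {Submodule.Quotient.mk (p := V) x} ⊓ U :=
          ⟨Submodule.mem_span_singleton_self _, hmem⟩
        rw [hU.inf_eq_bot] at this
        exact h ((Submodule.Quotient.mk_eq_zero V).mp this)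
      set C' : Submodule F L := U.comap V.mkQ with hC'
      have hVC : V ≤ C' := fun v hv => by
        simp only [hC', Submodule.mem_comap, Submodule.mkQ_apply]
        rw [(Submodule.Quotient.mk_eq_zero V).mpr hv]
        exact U.zero_mem
      have hCmem : ∀ y m : L, m ∈ C' → ⁅y, m⁆ ∈ C' := by
        intro y m _
        apply hVC
        show ⁅y, m⁆ ∈ LieAlgebra.derivedSeries F L 1
        rw [LieAlgebra.derivedSeries_def, LieAlgebra.derivedSeriesOfIdeal_succ,
          LieAlgebra.derivedSeriesOfIdeal_zero]
        exact LieSubmodule.lie_mem_lie (LieSubmodule.mem_top y) (LieSubmodule.mem_top m)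
      refine ⟨⟨C', fun {y m} hm => hCmem y m hm⟩, ?_, ⊥, fun z hz => ?_, fun z hz hzC => ?_⟩
      · rw [eq_top_iff]
        rintro a -
        have ha : Submodule.Quotient.mk (p := V) a ∈
            Submodule.span F {Submodule.Quotient.mk (p := V) x} ⊔ U := by
          rw [hU.sup_eq_top]; trivial
        obtain ⟨s, hs, u, hu, hsum⟩ := Submodule.mem_sup.mp ha
        rw [Submodule.mem_span_singleton] at hs
        obtain ⟨c, rfl⟩ := hs
        have hac : a - c • x ∈ C' := by
          simp only [hC', Submodule.mem_comap, Submodule.mkQ_apply]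
          have : Submodule.Quotient.mk (p := V) (a - c • x) = u := by
            rw [Submodule.Quotient.mk_sub]
            rw [← hsum]
            simp [Submodule.Quotient.mk_smul]
          rw [this]; exact hu
        have hcx : c • x ∈ (lineSpan F x).toSubmodule :=
          Submodule.smul_mem _ c (Submodule.mem_span_singleton_self x)
        have : a = c • x + (a - c • x) := by abel
        rw [this]
        exact Submodule.add_mem_sup hcx hac
      · have : z = 0 := hz
        rw [this]; exact (lineSpan F x).zero_mem
      · have hz' : z ∈ Submodule.span F {x} := hz
        rw [Submodule.mem_span_singleton] at hz'
        obtain ⟨c, rfl⟩ := hz'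
        rcases eq_or_ne c 0 with rfl | hc
        · simp
        · exfalso
          have hxC : x ∈ C' := by
            have := C'.smul_mem c⁻¹ hzC
            rwa [smul_smul, inv_mul_cancel₀ hc, one_smul] at this
          apply hxU
          have := hxC
          simpa [hC'] using this
end

section
/- Let L be a finite-dimensional Lie algebra over any field F. Then every one-dimensional subalgebra of L is a c-ideal of L if and only if either L³ = 0 (where L¹ = L, L^{k+1} = [L, L^k]), or L = A ⊕ B where A is an abelian ideal of L and B is an almost abelian ideal of L. -/
section Helpers

variable {F L : Type*} [Field F] [LieRing L] [LieAlgebra F L]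

lemma bracket_mem_lcs1 (y z : L) : ⁅y, z⁆ ∈ LieModule.lowerCentralSeries F L L 1 := by
  rw [LieModule.lowerCentralSeries_succ, LieModule.lowerCentralSeries_zero]
  exact LieSubmodule.lie_mem_lie (LieSubmodule.mem_top _) (LieSubmodule.mem_top _)

/-- An ideal whose underlying submodule contains all brackets. -/
def idealOfBrackets (S : Submodule F L) (h : ∀ y z : L, ⁅y, z⁆ ∈ S) : LieIdeal F L :=
  { S with lie_mem := fun {y} {z} _ => h y z }

lemma mem_idealOfBrackets {S : Submodule F L} {h : ∀ y z : L, ⁅y, z⁆ ∈ S} {x : L} :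
    x ∈ idealOfBrackets S h ↔ x ∈ S :=
  Iff.rfl

/-- The line spanned by `u` as an ideal, when it is one. -/
def lineIdeal (u : L) (h : ∀ y : L, ⁅y, u⁆ ∈ Submodule.span F {u}) : LieIdeal F L :=
  { Submodule.span F {u} with
    lie_mem := by
      intro y z hz
      replace hz : z ∈ Submodule.span F {u} := hz
      rw [Submodule.mem_span_singleton] at hz
      obtain ⟨c, rfl⟩ := hz
      show ⁅y, c • u⁆ ∈ Submodule.span F {u}
      rw [lie_smul]
      exact Submodule.smul_mem _ _ (h y) }

lemma mem_lineIdeal {u : L} {h : ∀ y : L, ⁅y, u⁆ ∈ Submodule.span F {u}} {x : L} :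
    x ∈ lineIdeal u h ↔ x ∈ Submodule.span F {u} :=
  Iff.rfl

lemma rev_aux [FiniteDimensional F L]
    (hkey : ∀ u ∈ (LieModule.lowerCentralSeries F L L 1 : Submodule F L),
      ∀ y : L, ⁅y, u⁆ ∈ Submodule.span F {u}) :
    ∀ B : LieSubalgebra F L, Module.finrank F B = 1 → IsCIdeal F B := by
  intro B hB
  obtain ⟨v, hv0, hvgen⟩ := finrank_eq_one_iff'.mp hB
  set u : L := (v : L) with hu
  have hu0 : u ≠ 0 := fun h => hv0 (Subtype.ext h)
  have hBspan : B.toSubmodule = Submodule.span F {u} := by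
    apply le_antisymm
    · intro w hw
      obtain ⟨c, hc⟩ := hvgen ⟨w, hw⟩
      rw [Submodule.mem_span_singleton]
      exact ⟨c, congrArg Subtype.val hc⟩
    · rw [Submodule.span_singleton_le_iff_mem]
      exact v.2
  have hmemB : ∀ w : L, w ∈ B ↔ w ∈ Submodule.span F {u} := by
    intro w
    rw [← hBspan]; rfl
  by_cases hcase : u ∈ (LieModule.lowerCentralSeries F L L 1 : Submodule F L)
  · -- `Fu` is an ideal
    refine ⟨⊤, by simp, lineIdeal u (hkey u hcase), ?_, ?_⟩
    · intro z hz
      rw [hmemB]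
      exact hz
    · intro z hz _
      rw [mem_lineIdeal, ← hmemB]
      exact hz
  · -- complement construction
    obtain ⟨U, hU⟩ := Submodule.exists_isCompl
      ((LieModule.lowerCentralSeries F L L 1 : Submodule F L) ⊔ Submodule.span F {u})
    set S : Submodule F L := (LieModule.lowerCentralSeries F L L 1 : Submodule F L) ⊔ U with hS
    have hbrS : ∀ y z : L, ⁅y, z⁆ ∈ S :=
      fun y z => Submodule.mem_sup_left ((LieSubmodule.mem_toSubmodule _).mpr (bracket_mem_lcs1 y z))
    refine ⟨idealOfBrackets S hbrS, ?_, ⊥, ?_, ?_⟩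
    · rw [hBspan]
      have : (idealOfBrackets S hbrS : Submodule F L) = S := rfl
      rw [this, hS, ← sup_assoc, sup_comm (Submodule.span F {u}), ]
      exact hU.codisjoint.eq_top
    · intro z hz
      rw [LieSubmodule.mem_bot] at hz
      subst hz
      exact B.zero_mem
    · intro z hzB hzS
      rw [LieSubmodule.mem_bot]
      rw [hmemB, Submodule.mem_span_singleton] at hzB
      obtain ⟨c, rfl⟩ := hzB
      replace hzS : c • u ∈ S := hzS
      rw [hS, Submodule.mem_sup] at hzS
      obtain ⟨w, hw, vU, hvU, heq⟩ := hzS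
      have hvU2 : vU ∈ (LieModule.lowerCentralSeries F L L 1 : Submodule F L)
          ⊔ Submodule.span F {u} := by
        have : vU = c • u - w := by rw [← heq]; abel
        rw [this]
        exact Submodule.sub_mem _
          (Submodule.mem_sup_right (Submodule.smul_mem _ _ (Submodule.mem_span_singleton_self u)))
          (Submodule.mem_sup_left hw)
      have hvU0 : vU = 0 := by
        have := hU.disjoint.le_bot ⟨hvU2, hvU⟩
        simpa using this
      rcases eq_or_ne c 0 with hc | hc
      · rw [hc, zero_smul]
      · exfalso
        apply hcase
        have : c • u = w := by rw [← heq, hvU0, add_zero]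
        have : u = c⁻¹ • w := by rw [← this, smul_smul, inv_mul_cancel₀ hc, one_smul]
        rw [this]
        exact Submodule.smul_mem _ _ hw


lemma rev_case1 (h2 : LieModule.lowerCentralSeries F L L 2 = ⊥) :
    ∀ u ∈ (LieModule.lowerCentralSeries F L L 1 : Submodule F L),
      ∀ y : L, ⁅y, u⁆ ∈ Submodule.span F {u} := by
  intro u hu y
  have hu' : u ∈ LieModule.lowerCentralSeries F L L 1 := (LieSubmodule.mem_toSubmodule _).mp hu
  have h : ⁅y, u⁆ ∈ LieModule.lowerCentralSeries F L L 2 := by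
    rw [show (2:ℕ) = 1 + 1 from rfl, LieModule.lowerCentralSeries_succ]
    exact LieSubmodule.lie_mem_lie (LieSubmodule.mem_top _) hu'
  rw [h2, LieSubmodule.mem_bot] at h
  rw [h]
  exact Submodule.zero_mem _

lemma rev_case2 (A B : LieIdeal F L) (hA : IsLieAbelian A) (hB : IsAlmostAbelian F B)
    (hsup : (A : Submodule F L) ⊔ (B : Submodule F L) = ⊤)
    (hinf : (A : Submodule F L) ⊓ (B : Submodule F L) = ⊥) :
    ∀ u ∈ (LieModule.lowerCentralSeries F L L 1 : Submodule F L),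
      ∀ y : L, ⁅y, u⁆ ∈ Submodule.span F {u} := by
  obtain ⟨xB, hDab, hDx, hDsup, hDinf⟩ := hB
  set D := LieAlgebra.derivedSeries F (↥B) 1 with hD
  -- cross brackets vanish
  have hab0 : ∀ a ∈ A, ∀ b ∈ B, ⁅a, b⁆ = 0 := by
    intro a ha b hb
    have h1 : ⁅a, b⁆ ∈ A := by
      rw [← lie_skew]
      exact neg_mem (A.lie_mem (x := b) ha)
    have h2 : ⁅a, b⁆ ∈ B := B.lie_mem hb
    have : ⁅a, b⁆ ∈ (A : Submodule F L) ⊓ (B : Submodule F L) :=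
      ⟨(LieSubmodule.mem_toSubmodule _).mpr h1, (LieSubmodule.mem_toSubmodule _).mpr h2⟩
    rw [hinf] at this
    simpa using this
  have habelA : ∀ a ∈ A, ∀ a' ∈ A, ⁅a, a'⁆ = 0 := by
    intro a ha a' ha'
    exact congrArg Subtype.val (hA.trivial ⟨a, ha⟩ ⟨a', ha'⟩)
  have habD : ∀ (d e : ↥B), d ∈ D → e ∈ D → ⁅d, e⁆ = 0 := by
    intro d e hd he
    exact congrArg Subtype.val (hDab.trivial ⟨d, hd⟩ ⟨e, he⟩)
  have hDtop : ∀ (v w : ↥B), ⁅v, w⁆ ∈ D := by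
    intro v w
    have hDeq : D = ⁅(⊤ : LieIdeal F ↥B), (⊤ : LieIdeal F ↥B)⁆ := by
      rw [hD, LieAlgebra.derivedSeries_def, LieAlgebra.derivedSeriesOfIdeal_succ,
        LieAlgebra.derivedSeriesOfIdeal_zero]
    rw [hDeq]
    exact LieSubmodule.lie_mem_lie (LieSubmodule.mem_top _) (LieSubmodule.mem_top _)
  have hcoeB : ∀ (v w : ↥B), (↑⁅v, w⁆ : L) = ⁅(v : L), (w : L)⁆ := fun v w => rfl
  -- the submodule of elements coming from D
  set P : Submodule F L :=
    { carrier := {u | ∃ uB : ↥B, (↑uB : L) = u ∧ uB ∈ D}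
      add_mem' := by
        rintro a b ⟨aB, rfl, haD⟩ ⟨bB, rfl, hbD⟩
        exact ⟨aB + bB, rfl, D.add_mem haD hbD⟩
      zero_mem' := ⟨0, rfl, D.zero_mem⟩
      smul_mem' := by
        rintro c a ⟨aB, rfl, haD⟩
        exact ⟨c • aB, rfl, D.smul_mem c haD⟩ } with hP
  have hmemP : ∀ u : L, u ∈ P ↔ ∃ uB : ↥B, (↑uB : L) = u ∧ uB ∈ D := fun u => Iff.rfl
  -- brackets land in P
  have hbrP : ∀ y y' : L, ⁅y, y'⁆ ∈ P := by
    intro y y'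
    have hy : y ∈ (A : Submodule F L) ⊔ (B : Submodule F L) := by rw [hsup]; trivial
    have hy' : y' ∈ (A : Submodule F L) ⊔ (B : Submodule F L) := by rw [hsup]; trivial
    obtain ⟨a, ha, b, hb, rfl⟩ := Submodule.mem_sup.mp hy
    obtain ⟨a', ha', b', hb', rfl⟩ := Submodule.mem_sup.mp hy'
    replace ha : a ∈ A := ha
    replace ha' : a' ∈ A := ha'
    replace hb : b ∈ B := hb
    replace hb' : b' ∈ B := hb'
    rw [hmemP]
    refine ⟨⁅(⟨b, hb⟩ : ↥B), (⟨b', hb'⟩ : ↥B)⁆, ?_, hDtop _ _⟩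
    rw [hcoeB]
    show ⁅b, b'⁆ = ⁅a + b, a' + b'⁆
    rw [add_lie, lie_add, lie_add, habelA a ha a' ha', hab0 a ha b' hb']
    rw [show ⁅b, a'⁆ = -⁅a', b⁆ from (lie_skew _ _).symm, hab0 a' ha' b hb]
    simp
  -- LCS1 is contained in P
  have hlieP : ∀ y u : L, u ∈ P → ⁅y, u⁆ ∈ P := by
    intro y u hu
    obtain ⟨uB, rfl, huD⟩ := (hmemP u).mp hu
    have hy : y ∈ (A : Submodule F L) ⊔ (B : Submodule F L) := by rw [hsup]; trivial
    obtain ⟨a, ha, b, hb, rfl⟩ := Submodule.mem_sup.mp hy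
    replace ha : a ∈ A := ha
    replace hb : b ∈ B := hb
    rw [hmemP]
    refine ⟨⁅(⟨b, hb⟩ : ↥B), uB⁆, ?_, D.lie_mem huD⟩
    rw [hcoeB]
    show ⁅b, (uB : L)⁆ = ⁅a + b, (uB : L)⁆
    rw [add_lie, hab0 a ha _ uB.2, zero_add]
  have hP1 : ∀ u ∈ (LieModule.lowerCentralSeries F L L 1 : Submodule F L), u ∈ P := by
    intro u hu
    replace hu : u ∈ LieModule.lowerCentralSeries F L L 1 := hu
    rw [LieModule.lowerCentralSeries_succ, LieModule.lowerCentralSeries_zero] at hu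
    let P' : LieSubmodule F L L := { P with lie_mem := fun {y} {m} h => hlieP y m h }
    have hle : ⁅(⊤ : LieIdeal F L), (⊤ : LieSubmodule F L L)⁆ ≤ P' := by
      rw [LieSubmodule.lie_le_iff]
      intro x _ m _
      exact hbrP x m
    exact hle hu
  -- conclude
  intro u hu y
  obtain ⟨uB, rfl, huD⟩ := (hmemP u).mp (hP1 u hu)
  have hy : y ∈ (A : Submodule F L) ⊔ (B : Submodule F L) := by rw [hsup]; trivial
  obtain ⟨a, ha, b, hb, rfl⟩ := Submodule.mem_sup.mp hy
  replace ha : a ∈ A := ha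
  replace hb : b ∈ B := hb
  have hbB : (⟨b, hb⟩ : ↥B) ∈ (D : Submodule F ↥B) ⊔ Submodule.span F {xB} := by
    rw [hDsup]; trivial
  obtain ⟨d, hd, s, hs, hbd⟩ := Submodule.mem_sup.mp hbB
  obtain ⟨c, rfl⟩ := Submodule.mem_span_singleton.mp hs
  replace hd : d ∈ D := hd
  have hbu : ⁅(⟨b, hb⟩ : ↥B), uB⁆ = c • uB := by
    rw [← hbd, add_lie, habD d uB hd huD, smul_lie, hDx uB huD, zero_add]
  have : ⁅a + b, (uB : L)⁆ = c • (uB : L) := by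
    rw [add_lie, hab0 a ha _ uB.2, zero_add]
    rw [show ⁅b, (uB : L)⁆ = ↑⁅(⟨b, hb⟩ : ↥B), uB⁆ from rfl, hbu]
    rfl
  rw [this]
  exact Submodule.smul_mem _ _ (Submodule.mem_span_singleton_self _)

end Helpers

section Forward

variable {F L : Type*} [Field F] [LieRing L] [LieAlgebra F L]

lemma fwd_key [FiniteDimensional F L]
    (h : ∀ B : LieSubalgebra F L, Module.finrank F B = 1 → IsCIdeal F B) :
    ∀ u ∈ LieModule.lowerCentralSeries F L L 1, ∀ y : L, ⁅y, u⁆ ∈ Submodule.span F {u} := by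
  intro u hu y
  rcases eq_or_ne u 0 with rfl | hu0
  · rw [lie_zero]; exact Submodule.zero_mem _
  have hfr : Module.finrank F (lineSpan F u) = 1 := finrank_span_singleton hu0
  obtain ⟨C, hsupC, D, hDle, hCD⟩ := h (lineSpan F u) hfr
  have hmemLS : ∀ w : L, w ∈ lineSpan F u ↔ w ∈ Submodule.span F {u} := fun w => Iff.rfl
  have hLC : ∀ y' z : L, ⁅y', z⁆ ∈ C := by
    have huC : ∀ y' : L, ⁅y', u⁆ ∈ C := by
      intro y'
      have hy' : y' ∈ (lineSpan F u).toSubmodule ⊔ (C : Submodule F L) := by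
        rw [hsupC]; trivial
      obtain ⟨s, hs, c, hc, rfl⟩ := Submodule.mem_sup.mp hy'
      obtain ⟨e, rfl⟩ := Submodule.mem_span_singleton.mp hs
      rw [add_lie, smul_lie, lie_self, smul_zero, zero_add, ← lie_skew]
      exact neg_mem (C.lie_mem (show c ∈ C from hc))
    intro y' z
    have hz : z ∈ (lineSpan F u).toSubmodule ⊔ (C : Submodule F L) := by
      rw [hsupC]; trivial
    obtain ⟨s, hs, c, hc, rfl⟩ := Submodule.mem_sup.mp hz
    obtain ⟨e, rfl⟩ := Submodule.mem_span_singleton.mp hs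
    rw [lie_add, lie_smul]
    exact add_mem (Submodule.smul_mem _ _ ((LieSubmodule.mem_toSubmodule _).mpr (huC y')))
      ((LieSubmodule.mem_toSubmodule _).mpr (C.lie_mem (show c ∈ C from hc)))
  have huC : u ∈ C := by
    rw [LieModule.lowerCentralSeries_succ, LieModule.lowerCentralSeries_zero] at hu
    have hle : ⁅(⊤ : LieIdeal F L), (⊤ : LieSubmodule F L L)⁆ ≤ C := by
      rw [LieSubmodule.lie_le_iff]
      intro a _ b _
      exact hLC a b
    exact hle hu
  have huD : u ∈ D := hCD u (Submodule.mem_span_singleton_self u) huC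
  exact hDle _ (D.lie_mem huD)

lemma fwd [FiniteDimensional F L]
    (h : ∀ B : LieSubalgebra F L, Module.finrank F B = 1 → IsCIdeal F B) :
    LieModule.lowerCentralSeries F L L 2 = ⊥ ∨
      ∃ A B : LieIdeal F L, IsLieAbelian A ∧ IsAlmostAbelian F B ∧
        (A : Submodule F L) ⊔ (B : Submodule F L) = ⊤ ∧
        (A : Submodule F L) ⊓ (B : Submodule F L) = ⊥ := by
  have key := fwd_key h
  by_cases hW : LieModule.lowerCentralSeries F L L 1 = ⊥
  · left
    rw [show (2:ℕ) = 1 + 1 from rfl, LieModule.lowerCentralSeries_succ, hW,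
      LieSubmodule.lie_bot]
  · obtain ⟨z₀, hz₀W, hz₀⟩ : ∃ z ∈ LieModule.lowerCentralSeries F L L 1, z ≠ 0 := by
      by_contra hcon
      push_neg at hcon
      exact hW (by rw [LieSubmodule.eq_bot_iff]; exact hcon)
    have hchoice : ∀ y : L, ∃ c : F, c • z₀ = ⁅y, z₀⁆ := fun y =>
      Submodule.mem_span_singleton.mp (key z₀ hz₀W y)
    set lam : L → F := fun y => (hchoice y).choose with hlamdef
    have hlam : ∀ y : L, lam y • z₀ = ⁅y, z₀⁆ := fun y => (hchoice y).choose_spec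
    have hcancel : ∀ c d : F, c • z₀ = d • z₀ → c = d := by
      intro c d hcd
      have h0 : (c - d) • z₀ = 0 := by rw [sub_smul, hcd, sub_self]
      rcases smul_eq_zero.mp h0 with h' | h'
      · exact sub_eq_zero.mp h'
      · exact absurd h' hz₀
    have hscal : ∀ y : L, ∀ z ∈ LieModule.lowerCentralSeries F L L 1,
        ⁅y, z⁆ = lam y • z := by
      intro y z hz
      by_cases hzs : z ∈ Submodule.span F {z₀}
      · obtain ⟨d, rfl⟩ := Submodule.mem_span_singleton.mp hzs
        rw [lie_smul, ← hlam y, smul_comm]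
      · obtain ⟨a, ha⟩ := Submodule.mem_span_singleton.mp (key z hz y)
        have hzz : z + z₀ ∈ LieModule.lowerCentralSeries F L L 1 := add_mem hz hz₀W
        obtain ⟨b, hb⟩ := Submodule.mem_span_singleton.mp (key (z + z₀) hzz y)
        have heq : b • z + b • z₀ = a • z + lam y • z₀ := by
          rw [← smul_add, hb, lie_add, ← ha, ← hlam y]
        have hba : b = a := by
          by_contra hne
          apply hzs
          have h1 : (b - a) • z = (lam y - b) • z₀ := by
            rw [sub_smul, sub_smul, sub_eq_sub_iff_add_eq_add, heq, add_comm]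
          have h2 : z = (b - a)⁻¹ • ((lam y - b) • z₀) := by
            rw [← h1, smul_smul, inv_mul_cancel₀ (sub_ne_zero.mpr hne), one_smul]
          rw [h2]
          exact Submodule.smul_mem _ _ (Submodule.smul_mem _ _
            (Submodule.mem_span_singleton_self _))
        rw [hba] at heq
        have hcb : lam y = a := hcancel _ _ (add_left_cancel heq).symm
        rw [← ha, hcb]
    have hbr : ∀ a b : L, lam ⁅a, b⁆ = 0 := by
      intro a b
      apply hcancel _ 0
      rw [zero_smul, hlam, lie_lie, hscal b z₀ hz₀W, hscal a z₀ hz₀W, lie_smul, lie_smul,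
        hscal a z₀ hz₀W, hscal b z₀ hz₀W, smul_smul, smul_smul, mul_comm]
      exact sub_self _
    have hadd : ∀ y y' : L, lam (y + y') = lam y + lam y' := by
      intro y y'
      apply hcancel
      rw [hlam, add_lie, ← hlam, ← hlam, add_smul]
    have hsmulc : ∀ (c : F) (y : L), lam (c • y) = c * lam y := by
      intro c y
      apply hcancel
      rw [hlam, smul_lie, ← hlam, smul_smul]
    have hlam0 : lam 0 = 0 := by
      have h0 := hsmulc 0 0
      rw [zero_smul, zero_mul] at h0
      exact h0
    have hneg : ∀ y : L, lam (-y) = -lam y := by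
      intro y
      have hn := hsmulc (-1) y
      rw [neg_one_smul, neg_one_mul] at hn
      exact hn
    have hsub : ∀ y y' : L, lam (y - y') = lam y - lam y' := by
      intro y y'
      rw [sub_eq_add_neg, hadd, hneg, ← sub_eq_add_neg]
    have hlamW : ∀ z ∈ LieModule.lowerCentralSeries F L L 1, lam z = 0 := by
      let K0 : LieIdeal F L :=
        { carrier := {y | lam y = 0}
          add_mem' := by
            intro a b ha hb
            show lam (a + b) = 0
            rw [hadd, ha, hb, add_zero]
          zero_mem' := hlam0
          smul_mem' := by
            intro c a ha
            show lam (c • a) = 0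
            rw [hsmulc, ha, mul_zero]
          lie_mem := fun {a b} _ => hbr a b }
      intro z hz
      rw [LieModule.lowerCentralSeries_succ, LieModule.lowerCentralSeries_zero] at hz
      have hle : ⁅(⊤ : LieIdeal F L), (⊤ : LieSubmodule F L L)⁆ ≤ K0 := by
        rw [LieSubmodule.lie_le_iff]
        intro a _ b _
        exact hbr a b
      exact hle hz
    by_cases hall : ∀ y : L, lam y = 0
    · left
      rw [show (2:ℕ) = 1 + 1 from rfl, LieModule.lowerCentralSeries_succ, eq_bot_iff,
        LieSubmodule.lie_le_iff]
      intro a _ m hm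
      rw [LieSubmodule.mem_bot, hscal a m hm, hall, zero_smul]
    · push_neg at hall
      obtain ⟨y₀, hy₀⟩ := hall
      set x : L := (lam y₀)⁻¹ • y₀ with hxdef
      have hx1 : lam x = 1 := by rw [hxdef, hsmulc]; exact inv_mul_cancel₀ hy₀
      set Bsub : Submodule F L :=
        LieSubmodule.toSubmodule (LieModule.lowerCentralSeries F L L 1) ⊔
          Submodule.span F {x} with hBsubdef
      have hbrB : ∀ y z : L, ⁅y, z⁆ ∈ Bsub :=
        fun y z => Submodule.mem_sup_left (bracket_mem_lcs1 y z)
      set Bid : LieIdeal F L := idealOfBrackets Bsub hbrB with hBiddef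
      have hAprop : ∀ a : L, lam a = 0 → ⁅x, a⁆ = 0 → ∀ y : L, ⁅y, a⁆ = 0 := by
        intro a h1 h2 y
        have hw : ⁅y, a⁆ ∈ LieModule.lowerCentralSeries F L L 1 := bracket_mem_lcs1 y a
        have e1 : ⁅x, ⁅y, a⁆⁆ = ⁅y, a⁆ := by rw [hscal x _ hw, hx1, one_smul]
        have e2 : ⁅x, ⁅y, a⁆⁆ = ⁅⁅x, y⁆, a⁆ + ⁅y, ⁅x, a⁆⁆ := leibniz_lie x y a
        have e3 : ⁅⁅x, y⁆, a⁆ = 0 := by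
          rw [← lie_skew, hscal a _ (bracket_mem_lcs1 x y), h1, zero_smul, neg_zero]
        rw [e3, h2, lie_zero, add_zero] at e2
        rw [← e1, e2]
      let Asub : Submodule F L :=
        { carrier := {a | lam a = 0 ∧ ⁅x, a⁆ = 0}
          add_mem' := by
            rintro a b ⟨ha1, ha2⟩ ⟨hb1, hb2⟩
            exact ⟨by rw [hadd, ha1, hb1, add_zero], by rw [lie_add, ha2, hb2, add_zero]⟩
          zero_mem' := ⟨hlam0, lie_zero x⟩
          smul_mem' := by
            rintro c a ⟨ha1, ha2⟩
            exact ⟨by rw [hsmulc, ha1, mul_zero], by rw [lie_smul, ha2, smul_zero]⟩ }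
      let Aid : LieIdeal F L :=
        { Asub with
          lie_mem := by
            rintro y a ⟨ha1, ha2⟩
            have h0 := hAprop a ha1 ha2 y
            show lam ⁅y, a⁆ = 0 ∧ ⁅x, ⁅y, a⁆⁆ = 0
            rw [h0]
            exact ⟨hlam0, lie_zero x⟩ }
      have hmemA : ∀ a : L, a ∈ Aid ↔ lam a = 0 ∧ ⁅x, a⁆ = 0 := fun a => Iff.rfl
      have hmemB : ∀ b : L, b ∈ Bid ↔ b ∈ Bsub := fun b => Iff.rfl
      have hxB : x ∈ Bid :=
        Submodule.mem_sup_right (Submodule.mem_span_singleton_self x)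
      right
      refine ⟨Aid, Bid, ?_, ?_, ?_, ?_⟩
      · -- A abelian
        constructor
        intro a b
        exact Subtype.ext (hAprop _ b.2.1 b.2.2 _)
      · -- B almost abelian
        set xB : (↥Bid) := ⟨x, hxB⟩ with hxBdef
        set DD := LieAlgebra.derivedSeries F (↥Bid) 1 with hDDdef
        have hDtop : ∀ v w : (↥Bid), ⁅v, w⁆ ∈ DD := by
          intro v w
          have hDeq : DD = ⁅(⊤ : LieIdeal F ↥Bid), (⊤ : LieIdeal F ↥Bid)⁆ := by
            rw [hDDdef, LieAlgebra.derivedSeries_def, LieAlgebra.derivedSeriesOfIdeal_succ,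
              LieAlgebra.derivedSeriesOfIdeal_zero]
          rw [hDeq]
          exact LieSubmodule.lie_mem_lie (LieSubmodule.mem_top _) (LieSubmodule.mem_top _)
        have hcoe : ∀ v w : (↥Bid), (↑⁅v, w⁆ : L) = ⁅(v : L), (w : L)⁆ := fun _ _ => rfl
        have hDmem : ∀ w : (↥Bid), w ∈ DD ↔
            (↑w : L) ∈ LieModule.lowerCentralSeries F L L 1 := by
          intro w
          constructor
          · intro hw
            let P' : LieSubmodule F (↥Bid) (↥Bid) :=
              { carrier := {v : ↥Bid | (↑v : L) ∈ LieModule.lowerCentralSeries F L L 1}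
                add_mem' := by
                  intro a b ha hb
                  show (a : L) + (b : L) ∈
                    LieSubmodule.toSubmodule (LieModule.lowerCentralSeries F L L 1)
                  exact Submodule.add_mem _ ha hb
                zero_mem' := by
                  show (0 : L) ∈
                    LieSubmodule.toSubmodule (LieModule.lowerCentralSeries F L L 1)
                  exact Submodule.zero_mem _
                smul_mem' := by
                  intro c a ha
                  show c • (a : L) ∈
                    LieSubmodule.toSubmodule (LieModule.lowerCentralSeries F L L 1)
                  exact Submodule.smul_mem _ c ha
                lie_mem := by
                  intro a b _
                  show (↑⁅a, b⁆ : L) ∈ LieModule.lowerCentralSeries F L L 1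
                  rw [hcoe]
                  exact bracket_mem_lcs1 _ _ }
            have hDeq : DD = ⁅(⊤ : LieIdeal F ↥Bid), (⊤ : LieIdeal F ↥Bid)⁆ := by
              rw [hDDdef, LieAlgebra.derivedSeries_def, LieAlgebra.derivedSeriesOfIdeal_succ,
                LieAlgebra.derivedSeriesOfIdeal_zero]
            have hle : ⁅(⊤ : LieIdeal F ↥Bid), (⊤ : LieIdeal F ↥Bid)⁆ ≤ P' := by
              rw [LieSubmodule.lie_le_iff]
              intro a _ b _
              show (↑⁅a, b⁆ : L) ∈ LieModule.lowerCentralSeries F L L 1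
              rw [hcoe]
              exact bracket_mem_lcs1 _ _
            rw [hDeq] at hw
            exact hle hw
          · intro hw
            have heq : w = ⁅xB, w⁆ := by
              apply Subtype.ext
              rw [hcoe]
              exact (by rw [hscal x _ hw, hx1, one_smul] :
                ⁅x, (↑w : L)⁆ = (↑w : L)).symm
            have h2 := hDtop xB w
            rwa [← heq] at h2
        refine ⟨xB, ?_, ?_, ?_, ?_⟩
        · constructor
          intro d e
          have hd : (↑(↑d : ↥Bid) : L) ∈ LieModule.lowerCentralSeries F L L 1 :=
            (hDmem _).mp d.2
          have he : (↑(↑e : ↥Bid) : L) ∈ LieModule.lowerCentralSeries F L L 1 :=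
            (hDmem _).mp e.2
          have h0 : (↑(↑⁅d, e⁆ : ↥Bid) : L) = 0 := by
            rw [show (↑(↑⁅d, e⁆ : ↥Bid) : L) = ⁅(↑(↑d : ↥Bid) : L), (↑(↑e : ↥Bid) : L)⁆
              from rfl, hscal _ _ he, hlamW _ hd, zero_smul]
          exact Subtype.ext (Subtype.ext h0)
        · intro y hy
          apply Subtype.ext
          rw [hcoe, hscal x _ ((hDmem y).mp hy), hx1, one_smul]
        · rw [eq_top_iff]
          intro w _
          have hw : (↑w : L) ∈ Bsub := w.2
          obtain ⟨z, hz, s, hs, heq⟩ := Submodule.mem_sup.mp hw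
          obtain ⟨c, rfl⟩ := Submodule.mem_span_singleton.mp hs
          have hzB : z ∈ Bid := Submodule.mem_sup_left hz
          have hzD : (⟨z, hzB⟩ : ↥Bid) ∈ DD := (hDmem ⟨z, hzB⟩).mpr hz
          refine Submodule.mem_sup.mpr ⟨⟨z, hzB⟩, hzD, c • xB,
            Submodule.smul_mem _ _ (Submodule.mem_span_singleton_self _), ?_⟩
          exact Subtype.ext heq
        · rw [eq_bot_iff]
          rintro w ⟨hw1, hw2⟩
          obtain ⟨c, rfl⟩ := Submodule.mem_span_singleton.mp hw2
          replace hw1 : (c • xB) ∈ DD := hw1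
          have h1 : (↑(c • xB) : L) ∈ LieModule.lowerCentralSeries F L L 1 :=
            (hDmem _).mp hw1
          have h2 : lam (c • x) = 0 := hlamW _ h1
          rw [hsmulc, hx1, mul_one] at h2
          rw [h2, zero_smul]
          exact zero_mem _
      · -- sup = top
        rw [eq_top_iff]
        intro y _
        set w : L := ⁅x, y⁆ with hwdef
        set a : L := y - lam y • x - w with hadef
        have haA : a ∈ Aid := by
          rw [hmemA]
          constructor
          · rw [hadef, hsub, hsub, hsmulc, hx1, mul_one, hbr, sub_zero, sub_self]
          · rw [hadef, lie_sub, lie_sub, lie_smul, lie_self, smul_zero, sub_zero,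
              hscal x w (bracket_mem_lcs1 x y), hx1, one_smul, sub_self]
        have hmBw : w + lam y • x ∈ Bsub :=
          add_mem (Submodule.mem_sup_left (bracket_mem_lcs1 x y))
            (Submodule.mem_sup_right (Submodule.smul_mem _ _
              (Submodule.mem_span_singleton_self x)))
        refine Submodule.mem_sup.mpr ⟨a, haA, w + lam y • x, hmBw, ?_⟩
        rw [hadef]
        abel
      · -- inf = bot
        rw [eq_bot_iff]
        rintro y ⟨hyA, hyB⟩
        replace hyA : lam y = 0 ∧ ⁅x, y⁆ = 0 := hyA
        replace hyB : y ∈ Bsub := hyB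
        obtain ⟨z, hz, s, hs, heq⟩ := Submodule.mem_sup.mp hyB
        obtain ⟨c, rfl⟩ := Submodule.mem_span_singleton.mp hs
        have hc : c = 0 := by
          have h1 : lam (z + c • x) = c := by
            rw [hadd, hlamW z hz, hsmulc, hx1, mul_one, zero_add]
          rw [heq, hyA.1] at h1
          exact h1.symm
        rw [hc, zero_smul, add_zero] at heq
        subst heq
        have h2 : ⁅x, z⁆ = z := by rw [hscal x z hz, hx1, one_smul]
        rw [Submodule.mem_bot, ← h2, hyA.2]

end Forward

/-- Every one-dimensional subalgebra of `L` is a c-ideal of `L` if and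
only if `L³ = 0`, or `L = A ⊕ B` where `A` is an abelian ideal of `L` and `B` is an almost
abelian ideal of `L`. -/
theorem forall_one_dim_isCIdeal_iff {F L : Type*} [Field F] [LieRing L] [LieAlgebra F L]
    [FiniteDimensional F L] :
    (∀ B : LieSubalgebra F L, Module.finrank F B = 1 → IsCIdeal F B) ↔
      (LieModule.lowerCentralSeries F L L 2 = ⊥ ∨
        ∃ A B : LieIdeal F L, IsLieAbelian A ∧ IsAlmostAbelian F B ∧
          (A : Submodule F L) ⊔ (B : Submodule F L) = ⊤ ∧
          (A : Submodule F L) ⊓ (B : Submodule F L) = ⊥) := by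
  constructor
  · exact fwd
  · rintro (h2 | ⟨A, B, hA, hB, hsup, hinf⟩)
    · exact rev_aux (rev_case1 h2)
    · exact rev_aux (rev_case2 A B hA hB hsup hinf)
end

section
/- Let L be a finite-dimensional Lie algebra over any field F in which every one-dimensional subalgebra is a c-ideal of L. Then every minimal ideal of L is one-dimensional. -/
/-- If every one-dimensional subalgebra of `L` is a c-ideal of `L`,
then every minimal ideal of `L` is one-dimensional. -/
theorem minimal_ideal_finrank_eq_one {F L : Type*} [Field F] [LieRing L] [LieAlgebra F L]
    [FiniteDimensional F L]
    (h : ∀ B : LieSubalgebra F L, Module.finrank F B = 1 → IsCIdeal F B)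
    (A : LieIdeal F L) (hA : A ≠ ⊥)
    (hmin : ∀ I : LieIdeal F L, I ≤ A → I = ⊥ ∨ I = A) :
    Module.finrank F A = 1 := by
  -- pick a nonzero element of A
  obtain ⟨a, haA, ha0⟩ : ∃ a ∈ A, a ≠ 0 := by
    by_contra hc
    push_neg at hc
    exact hA (LieSubmodule.eq_bot_iff A |>.mpr hc)
  have hspan : (lineSpan F a).toSubmodule = Submodule.span F {a} := rfl
  have hBdim : Module.finrank F (lineSpan F a) = 1 := by
    exact finrank_span_singleton ha0
  have hAfin : Module.finrank F A ≠ 0 := by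
    intro h0
    apply hA
    have : A.toSubmodule = ⊥ := Submodule.finrank_eq_zero.mp h0
    ext x
    simp [LieSubmodule.mem_bot, ← LieSubmodule.mem_toSubmodule, this]
  obtain ⟨C, hsup, D, hDB, hBCD⟩ := h (lineSpan F a) hBdim
  by_cases haC : a ∈ C
  · -- a ∈ D, so D is a nonzero ideal contained in A, hence D = A ≤ span {a}
    have haB : a ∈ lineSpan F a := Submodule.mem_span_singleton_self a
    have haD : a ∈ D := hBCD a haB haC
    have hDA : D ≤ A := by
      intro x hx
      have hxB : x ∈ Submodule.span F {a} := hDB x hx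
      exact Submodule.span_le.mpr (by simpa using haA) hxB
    rcases hmin D hDA with hbot | hDeqA
    · exact absurd (hbot ▸ haD) (by simpa [LieSubmodule.mem_bot] using ha0)
    · have hAle : A.toSubmodule ≤ Submodule.span F {a} := by
        intro x hx
        exact hDB x (hDeqA ▸ hx)
      have h1 : Module.finrank F A ≤ 1 := by
        calc Module.finrank F A ≤ Module.finrank F (Submodule.span F {a}) :=
              Submodule.finrank_mono hAle
          _ = 1 := finrank_span_singleton ha0
      omega
  · -- A ⊓ C = ⊥, so finrank A + finrank C ≤ finrank L ≤ 1 + finrank C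
    have hAC : A ⊓ C = ⊥ := by
      rcases hmin (A ⊓ C) inf_le_left with hbot | heq
      · exact hbot
      · exact absurd ((heq.symm.le.trans inf_le_right) haA) haC
    have hACsub : A.toSubmodule ⊓ C.toSubmodule = ⊥ := by
      rw [← LieSubmodule.inf_toSubmodule, hAC]
      rfl
    have key : Module.finrank F (A.toSubmodule ⊔ C.toSubmodule : Submodule F L)
        + Module.finrank F (A.toSubmodule ⊓ C.toSubmodule : Submodule F L)
        = Module.finrank F A.toSubmodule + Module.finrank F C.toSubmodule :=
      Submodule.finrank_sup_add_finrank_inf_eq _ _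
    have key2 : Module.finrank F ((lineSpan F a).toSubmodule ⊔ C.toSubmodule : Submodule F L)
        + Module.finrank F ((lineSpan F a).toSubmodule ⊓ C.toSubmodule : Submodule F L)
        = Module.finrank F (lineSpan F a).toSubmodule + Module.finrank F C.toSubmodule :=
      Submodule.finrank_sup_add_finrank_inf_eq _ _
    have hsup' : (lineSpan F a).toSubmodule ⊔ C.toSubmodule = ⊤ := hsup
    rw [hsup'] at key2
    have hLle : Module.finrank F L ≤ 1 + Module.finrank F C.toSubmodule := by
      have htop : Module.finrank F (⊤ : Submodule F L) = Module.finrank F L :=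
        finrank_top F L
      have hB1 : Module.finrank F (lineSpan F a).toSubmodule = 1 := hBdim
      omega
    have hinf0 : Module.finrank F (A.toSubmodule ⊓ C.toSubmodule : Submodule F L) = 0 := by
      rw [hACsub]; exact finrank_bot F L
    have hsupleL : Module.finrank F (A.toSubmodule ⊔ C.toSubmodule : Submodule F L)
        ≤ Module.finrank F L := Submodule.finrank_le _
    have : Module.finrank F A.toSubmodule = Module.finrank F A := rfl
    omega
end

section
/- Let L be a finite-dimensional Lie algebra over a field F and let B be a retract of L, that is, there is a Lie algebra endomorphism θ : L → L such that θ(b) = b for all b ∈ B and θ(x) ∈ B for all x ∈ L. Then B is a c-ideal of L. -/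
/-- A retract of `L` is a c-ideal of `L`: if `θ : L → L` is a Lie
algebra endomorphism with `θ(b) = b` for all `b ∈ B` and `θ(x) ∈ B` for all `x ∈ L`,
then `B` is a c-ideal of `L`. -/
theorem isCIdeal_of_retract {F L : Type*} [Field F] [LieRing L] [LieAlgebra F L]
    [FiniteDimensional F L] (B : LieSubalgebra F L) (θ : L →ₗ⁅F⁆ L)
    (hb : ∀ b ∈ B, θ b = b) (hx : ∀ x : L, θ x ∈ B) :
    IsCIdeal F B := by
  refine ⟨θ.ker, ?_, ⊥, by simp, ?_⟩
  · rw [eq_top_iff]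
    intro x _
    have h1 : θ x ∈ B := hx x
    have h2 : x - θ x ∈ θ.ker := by
      rw [LieHom.mem_ker, map_sub θ, hb _ (hx x), sub_self]
    have h3 : x = θ x + (x - θ x) := by abel
    rw [h3]
    exact Submodule.add_mem_sup h1 h2
  · intro x hxB hxK
    rw [LieHom.mem_ker] at hxK
    have := hb x hxB
    simp [LieSubmodule.mem_bot]
    rw [← this, hxK]
end
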